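/- arXiv:1703.10636 — 6 statements merged into one kernel-verified Lean document; each statement's English description precedes it below -/
import Mathlib

section
/- Let C and D be cartesian categories and let L ⊣ R be an adjunction with L : D ⥤ C satisfying Frobenius reciprocity. Then the adjunction is an equivalence of categories (i.e., its unit and counit are isomorphisms) if and only if L sends the terminal object of D to a terminal object of C (L(1) ≅ 1) and, for every object W of D, the unit component η_W : W ⟶ R(L W) is a regular monomorphism. -/
open CategoryTheory Limits

universe v₁ v₂ v₃ u₁ u₂ u₃

/-- An adjunction `L ⊣ R` (with `L : D ⥤ C`) satisfies Frobenius reciprocity if the canonical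
morphism `L (W ⨯ R X) ⟶ L W ⨯ X`, with components `L π₁` and `ε_X ∘ L π₂`, is an isomorphism
for all objects `W` of `D` and `X` of `C`. -/
def FrobeniusReciprocity {D : Type u₁} [Category.{v₁} D] {C : Type u₂} [Category.{v₂} C]
    [HasFiniteLimits C] [HasFiniteLimits D]
    {L : D ⥤ C} {R : C ⥤ D} (adj : L ⊣ R) : Prop :=
  ∀ (W : D) (X : C),
    IsIso (prod.lift (L.map (prod.fst : W ⨯ R.obj X ⟶ W))
      (L.map (prod.snd : W ⨯ R.obj X ⟶ R.obj X) ≫ adj.counit.app X))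

section Aux
variable {D : Type u₁} [Category.{v₁} D] {C : Type u₂} [Category.{v₂} C]
    {L : D ⥤ C} {R : C ⥤ D} (adj : L ⊣ R)

lemma unit_isIso_at_R_obj (hc : IsIso adj.counit) (X : C) :
    IsIso (adj.unit.app (R.obj X)) := by
  haveI := hc
  haveI : IsIso (adj.unit.app (R.obj X) ≫ R.map (adj.counit.app X)) := by
    rw [adj.right_triangle_components X]
    exact ⟨𝟙 _, by simp, by simp⟩
  exact IsIso.of_isIso_comp_right _ (R.map (adj.counit.app X))

lemma unit_isIso_of_equalizer (hc : IsIso adj.counit)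
    {E A B : D} (hA : IsIso (adj.unit.app A)) (_hB : IsIso (adj.unit.app B))
    {u v : A ⟶ B} {e : E ⟶ A} (w : e ≫ u = e ≫ v) (hlim : IsLimit (Fork.ofι e w)) :
    IsIso (adj.unit.app E) := by
  haveI := hc
  haveI := hA
  haveI : Mono e := by
    have := mono_of_isLimit_fork hlim
    simpa using this
  set c : (L ⋙ R).obj E ⟶ A := (L ⋙ R).map e ≫ inv (adj.unit.app A) with hc_def
  have hcuv : c ≫ u = c ≫ v := by
    have hu : inv (adj.unit.app A) ≫ u = (L ⋙ R).map u ≫ inv (adj.unit.app B) := by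
      rw [IsIso.inv_comp_eq, ← Category.assoc, ← adj.unit.naturality u]
      simp
    have hv : inv (adj.unit.app A) ≫ v = (L ⋙ R).map v ≫ inv (adj.unit.app B) := by
      rw [IsIso.inv_comp_eq, ← Category.assoc, ← adj.unit.naturality v]
      simp
    rw [hc_def, Category.assoc, Category.assoc, hu, hv, ← Category.assoc, ← Category.assoc,
      ← Functor.map_comp, ← Functor.map_comp, w]
  obtain ⟨d, hd⟩ := Fork.IsLimit.lift' hlim c hcuv
  rw [Fork.ι_ofι] at hd
  have hnat : adj.unit.app E ≫ (L ⋙ R).map e = e ≫ adj.unit.app A := by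
    simpa using (adj.unit.naturality e).symm
  have h1 : adj.unit.app E ≫ d = 𝟙 E := by
    rw [← cancel_mono e, Category.assoc, hd, hc_def, ← Category.assoc, hnat,
      Category.assoc, IsIso.hom_inv_id]
    simp
  haveI : IsIso (L.map (adj.unit.app E)) := by
    haveI : IsIso (L.map (adj.unit.app E) ≫ adj.counit.app (L.obj E)) := by
      rw [adj.left_triangle_components E]
      exact ⟨𝟙 _, by simp, by simp⟩
    exact IsIso.of_isIso_comp_right _ (adj.counit.app (L.obj E))
  haveI : IsIso ((L ⋙ R).map (adj.unit.app E)) := by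
    show IsIso (R.map (L.map (adj.unit.app E)))
    infer_instance
  haveI : IsIso ((L ⋙ R).map d) := by
    haveI : IsIso ((L ⋙ R).map (adj.unit.app E) ≫ (L ⋙ R).map d) := by
      rw [← Functor.map_comp, h1]
      exact ⟨𝟙 _, by simp, by simp⟩
    exact IsIso.of_isIso_comp_left ((L ⋙ R).map (adj.unit.app E)) _
  haveI : IsIso (adj.unit.app ((L ⋙ R).obj E)) := by
    have := unit_isIso_at_R_obj adj hc (L.obj E)
    simpa using this
  have hdn : d ≫ adj.unit.app E = adj.unit.app ((L ⋙ R).obj E) ≫ (L ⋙ R).map d := by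
    simpa using (adj.unit.naturality d).symm
  haveI : IsIso (d ≫ adj.unit.app E) := by rw [hdn]; infer_instance
  haveI : Mono d := mono_of_mono d (adj.unit.app E)
  haveI : IsSplitEpi d := ⟨⟨⟨adj.unit.app E, h1⟩⟩⟩
  haveI : IsIso d := isIso_of_mono_of_isSplitEpi d
  haveI : IsIso (adj.unit.app E ≫ d) := by
    rw [h1]; exact ⟨𝟙 _, by simp, by simp⟩
  exact IsIso.of_isIso_comp_right _ d

end Aux

/-- A Frobenius adjunction is an equivalence (its unit and counit are isomorphisms) iff `L`
sends the terminal object to a terminal object and every unit component is a regular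
monomorphism. -/
theorem frobenius_adjunction_isEquivalence_iff
    {D : Type u₁} [Category.{v₁} D] {C : Type u₂} [Category.{v₂} C]
    [HasFiniteLimits C] [HasFiniteLimits D]
    {L : D ⥤ C} {R : C ⥤ D} (adj : L ⊣ R) (frob : FrobeniusReciprocity adj) :
    (IsIso adj.unit ∧ IsIso adj.counit) ↔
      (Nonempty (IsTerminal (L.obj (⊤_ D))) ∧
        ∀ W : D, Nonempty (RegularMono (adj.unit.app W))) := by
  constructor
  · rintro ⟨hu, hc⟩
    haveI := hu; haveI := hc
    constructor
    · let E : D ≌ C :=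
        ⟨L, R, asIso adj.unit, asIso adj.counit, fun W => adj.left_triangle_components W⟩
      haveI : L.IsEquivalence := E.isEquivalence_functor
      exact ⟨terminalIsTerminal.isTerminalObj L _⟩
    · intro W
      haveI : IsIso (adj.unit.app W) := inferInstance
      exact ⟨RegularMono.ofIso (asIso (adj.unit.app W))⟩
  · rintro ⟨⟨hT⟩, hreg⟩
    have hcApp : ∀ X : C, IsIso (adj.counit.app X) := by
      intro X
      haveI h1 : IsIso (prod.snd : L.obj (⊤_ D) ⨯ X ⟶ X) := by
        refine ⟨prod.lift (hT.from X) (𝟙 X), ?_, by exact prod.lift_snd _ _⟩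
        apply Limits.prod.hom_ext
        · exact hT.hom_ext _ _
        · rw [Category.assoc, prod.lift_snd]; simp
      haveI h2 : IsIso (prod.snd : (⊤_ D) ⨯ R.obj X ⟶ R.obj X) := by
        refine ⟨prod.lift (terminal.from _) (𝟙 _), ?_, by exact prod.lift_snd _ _⟩
        apply Limits.prod.hom_ext
        · apply Subsingleton.elim
        · rw [Category.assoc, prod.lift_snd]; simp
      haveI h3 := frob (⊤_ D) X
      have h4 : prod.lift (L.map (prod.fst : (⊤_ D) ⨯ R.obj X ⟶ ⊤_ D))
          (L.map (prod.snd : (⊤_ D) ⨯ R.obj X ⟶ R.obj X) ≫ adj.counit.app X) ≫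
          (prod.snd : L.obj (⊤_ D) ⨯ X ⟶ X)
          = L.map (prod.snd : (⊤_ D) ⨯ R.obj X ⟶ R.obj X) ≫ adj.counit.app X :=
        prod.lift_snd _ _
      haveI : IsIso (L.map (prod.snd : (⊤_ D) ⨯ R.obj X ⟶ R.obj X) ≫ adj.counit.app X) := by
        rw [← h4]; infer_instance
      haveI : IsIso (L.map (prod.snd : (⊤_ D) ⨯ R.obj X ⟶ R.obj X)) := inferInstance
      exact IsIso.of_isIso_comp_left (L.map (prod.snd : (⊤_ D) ⨯ R.obj X ⟶ R.obj X))
        (adj.counit.app X)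
    haveI hc : IsIso adj.counit := NatIso.isIso_of_isIso_app _
    have huApp : ∀ W : D, IsIso (adj.unit.app W) := by
      intro W
      obtain ⟨rm⟩ := hreg W
      obtain ⟨rmZ⟩ := hreg rm.Z
      haveI : Mono (adj.unit.app rm.Z) := rmZ.mono
      have hlim := isEqualizerCompMono rm.isLimit (adj.unit.app rm.Z)
      have hA : IsIso (adj.unit.app (R.obj (L.obj W))) := unit_isIso_at_R_obj adj hc _
      have hB : IsIso (adj.unit.app ((L ⋙ R).obj rm.Z)) := by
        have := unit_isIso_at_R_obj adj hc (L.obj rm.Z)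
        simpa using this
      exact unit_isIso_of_equalizer adj hc hA hB _ hlim
    exact ⟨NatIso.isIso_of_isIso_app _, hc⟩
end

section
/- Let C and D be cartesian categories, let Σ_D ⊣ D* be an adjunction with Σ_D : D ⥤ C, and let L ⊣ R be an adjunction with L : C ⥤ D such that there is a natural isomorphism Σ_D ∘ L ≅ Id_C. If L ⊣ R is Frobenius at the object L(1) of D (where 1 is the terminal object of C), then the functor C ⥤ D/L(1) sending an object X to the object of the slice given by L(!_X) : L X ⟶ L(1) (where !_X : X ⟶ 1 is the unique morphism to the terminal object), and a morphism h to L h, is an equivalence of categories. -/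
open CategoryTheory Limits

universe v₁ v₂ v₃ u₁ u₂ u₃

/-- An adjunction `L ⊣ R` (with `L : E ⥤ D`) is Frobenius at an object `X` of `D` if for every
`g : W ⟶ R X` and `f : Y ⟶ X` the canonical morphism `L (W ×_{R X} R Y) ⟶ L W ×_X Y`, with
components `L π₁` and `ε_Y ∘ L π₂`, into the pullback of `f` along the adjoint transpose
`ε_X ∘ L g` of `g`, is an isomorphism. -/
def FrobeniusAt {E : Type u₁} [Category.{v₁} E] {D : Type u₂} [Category.{v₂} D]
    [HasFiniteLimits E] [HasFiniteLimits D]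
    {L : E ⥤ D} {R : D ⥤ E} (adj : L ⊣ R) (X : D) : Prop :=
  ∀ (W : E) (g : W ⟶ R.obj X) (Y : D) (f : Y ⟶ X),
    IsIso (pullback.lift (L.map (pullback.fst g (R.map f)))
      (L.map (pullback.snd g (R.map f)) ≫ adj.counit.app Y)
      (by rw [← L.map_comp_assoc, pullback.condition, L.map_comp_assoc]; simp) :
      L.obj (pullback g (R.map f)) ⟶ pullback (L.map g ≫ adj.counit.app X) f)

/-- The functor `C ⥤ D/L(1)` sending an object `X` to `L(!_X) : L X ⟶ L 1` and a morphism `h`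
to `L h`. -/
noncomputable def sliceFunctor {C : Type u₁} [Category.{v₁} C] {D : Type u₂} [Category.{v₂} D]
    [HasTerminal C] (L : C ⥤ D) : C ⥤ Over (L.obj (⊤_ C)) where
  obj X := Over.mk (L.map (terminal.from X))
  map {X Y} h := Over.homMk (L.map h)
    (by dsimp; rw [← L.map_comp, terminal.comp_from])

section Aux

variable {C : Type u₁} [Category.{v₁} C] {D : Type u₂} [Category.{v₂} D]
    [HasFiniteLimits C] [HasFiniteLimits D]
    {L : C ⥤ D} {R : D ⥤ C} (adj : L ⊣ R)

/-- The comparison map `L (1 ×_{R L 1} R Y) ⟶ Y`. -/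
noncomputable def auxC (Y : D) (f : Y ⟶ L.obj (⊤_ C)) :
    L.obj (pullback (adj.unit.app (⊤_ C)) (R.map f)) ⟶ Y :=
  L.map (pullback.snd (adj.unit.app (⊤_ C)) (R.map f)) ≫ adj.counit.app Y

lemma auxC_triangle (Y : D) (f : Y ⟶ L.obj (⊤_ C)) :
    auxC adj Y f ≫ f =
      L.map (terminal.from (pullback (adj.unit.app (⊤_ C)) (R.map f))) := by
  rw [auxC, Category.assoc, ← adj.counit_naturality f, ← L.map_comp_assoc,
    ← pullback.condition, L.map_comp_assoc]
  erw [adj.left_triangle_components]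
  simp only [Functor.id_obj, Category.comp_id]
  congr 1
  exact terminal.hom_ext _ _

lemma auxC_isIso (frob : FrobeniusAt adj (L.obj (⊤_ C))) (Y : D) (f : Y ⟶ L.obj (⊤_ C)) :
    IsIso (auxC adj Y f) := by
  haveI := frob (⊤_ C) (adj.unit.app (⊤_ C)) Y f
  haveI : IsIso (L.map (adj.unit.app (⊤_ C)) ≫ adj.counit.app (L.obj (⊤_ C))) := by
    erw [adj.left_triangle_components]; exact IsIso.id _
  have e : auxC adj Y f =
      (pullback.lift (L.map (pullback.fst (adj.unit.app (⊤_ C)) (R.map f)))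
        (L.map (pullback.snd (adj.unit.app (⊤_ C)) (R.map f)) ≫ adj.counit.app Y)
        (by rw [← L.map_comp_assoc, pullback.condition, L.map_comp_assoc]; simp) :
        L.obj (pullback (adj.unit.app (⊤_ C)) (R.map f)) ⟶
          pullback (L.map (adj.unit.app (⊤_ C)) ≫ adj.counit.app (L.obj (⊤_ C))) f) ≫
        pullback.snd _ f := by
    rw [pullback.lift_snd]; rfl
  rw [e]
  infer_instance

/-- The unit map `Z ⟶ 1 ×_{R L 1} R L Z`. -/
noncomputable def auxU (Z : C) :
    Z ⟶ pullback (adj.unit.app (⊤_ C)) (R.map (L.map (terminal.from Z))) :=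
  pullback.lift (terminal.from Z) (adj.unit.app Z)
    (by simpa using adj.unit.naturality (terminal.from Z))

lemma auxU_comp (Z : C) :
    L.map (auxU adj Z) ≫ auxC adj (L.obj Z) (L.map (terminal.from Z)) = 𝟙 (L.obj Z) := by
  rw [auxC, ← L.map_comp_assoc, auxU, pullback.lift_snd, adj.left_triangle_components]

lemma aux_full {X Z : C} (hu : IsIso (auxU adj Z))
    (kl : L.obj X ⟶ L.obj Z)
    (wk : kl ≫ L.map (terminal.from Z) = L.map (terminal.from X)) :
    ∃ h : X ⟶ Z, L.map h = kl := by
  haveI := hu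
  have cond : terminal.from X ≫ adj.unit.app (⊤_ C) =
      (adj.unit.app X ≫ R.map kl) ≫ R.map (L.map (terminal.from Z)) := by
    rw [Category.assoc, ← R.map_comp, wk]
    simpa using adj.unit.naturality (terminal.from X)
  refine ⟨pullback.lift (terminal.from X) (adj.unit.app X ≫ R.map kl) cond ≫
    inv (auxU adj Z), ?_⟩
  have key : L.map (pullback.lift (terminal.from X) (adj.unit.app X ≫ R.map kl) cond) ≫
      auxC adj (L.obj Z) (L.map (terminal.from Z)) = kl := by
    rw [auxC, ← L.map_comp_assoc, pullback.lift_snd, L.map_comp, Category.assoc,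
      adj.counit_naturality, adj.left_triangle_components_assoc]
  have hinv : L.map (inv (auxU adj Z)) = auxC adj (L.obj Z) (L.map (terminal.from Z)) := by
    rw [← cancel_epi (L.map (auxU adj Z)), ← L.map_comp, IsIso.hom_inv_id, L.map_id,
      auxU_comp]
  rw [L.map_comp, hinv, key]

end Aux

/-- If `L ⊣ R` (with `L : C ⥤ D`) is split by the adjunction `Σ_D ⊣ D*` (i.e. `Σ_D ∘ L ≅ 𝟭 C`)
and is Frobenius at `L(1)`, then the canonical functor `C ⥤ D/L(1)` is an equivalence. -/
theorem sliceFunctor_isEquivalence_of_split_of_frobeniusAt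
    {C : Type u₁} [Category.{v₁} C] {D : Type u₂} [Category.{v₂} D]
    [HasFiniteLimits C] [HasFiniteLimits D]
    {SigD : D ⥤ C} {Dstar : C ⥤ D} (adjD : SigD ⊣ Dstar)
    {L : C ⥤ D} {R : D ⥤ C} (adj : L ⊣ R)
    (splitting : L ⋙ SigD ≅ 𝟭 C)
    (frob : FrobeniusAt adj (L.obj (⊤_ C))) :
    (sliceFunctor L).IsEquivalence := by
  -- `L` is faithful thanks to the splitting.
  have hfaith : ∀ {X Z : C} (h h' : X ⟶ Z), L.map h = L.map h' → h = h' := by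
    intro X Z h h' e
    have n1 := splitting.hom.naturality h
    have n2 := splitting.hom.naturality h'
    dsimp at n1 n2
    rw [e, n2] at n1
    exact ((cancel_epi (splitting.hom.app X)).mp n1).symm
  -- `L` is conservative thanks to the splitting.
  have hcons : ∀ {X Z : C} (h : X ⟶ Z), IsIso (L.map h) → IsIso h := by
    intro X Z h hh
    have n := splitting.hom.naturality h
    dsimp at n
    have : h = inv (splitting.hom.app X) ≫ SigD.map (L.map h) ≫ splitting.hom.app Z := by
      rw [n, IsIso.inv_hom_id_assoc]
    rw [this]
    haveI := hh
    infer_instance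
  -- the unit maps are isomorphisms
  have hU : ∀ Z : C, IsIso (auxU adj Z) := by
    intro Z
    apply hcons
    haveI := auxC_isIso adj frob (L.obj Z) (L.map (terminal.from Z))
    have : L.map (auxU adj Z) = inv (auxC adj (L.obj Z) (L.map (terminal.from Z))) :=
      IsIso.eq_inv_of_inv_hom_id (auxU_comp adj Z)
    rw [this]
    infer_instance
  refine { faithful := ?_, full := ?_, essSurj := ?_ }
  · constructor
    intro X Z h h' e
    apply hfaith
    exact congrArg CommaMorphism.left e
  · constructor
    intro X Z k
    obtain ⟨h, hh⟩ := aux_full adj (hU Z) (X := X) k.left (Over.w k)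
    refine ⟨h, ?_⟩
    ext
    exact hh
  · constructor
    intro f
    refine ⟨pullback (adj.unit.app (⊤_ C)) (R.map f.hom), ⟨?_⟩⟩
    haveI := auxC_isIso adj frob f.left f.hom
    refine Over.isoMk (@asIso _ _ _ _ (auxC adj f.left f.hom) this) ?_
    simpa [sliceFunctor] using auxC_triangle adj f.left f.hom
end

section
/- Let C and D be cartesian categories, let Σ_D ⊣ D* be an adjunction with Σ_D : D ⥤ C, let X be an object of C, and let L ⊣ R be an adjunction with L : C/X ⥤ D that is over C, i.e., there is a natural isomorphism Σ_D ∘ L ≅ Σ_X where Σ_X : C/X ⥤ C is the forgetful (domain) functor. If L ⊣ R is Frobenius at the object D*(X) of D, then the functor C/X ⥤ D/L(1) sending an object A of the slice C/X to L(!_A) : L A ⟶ L(1) (where 1 = (X, id_X) is the terminal object of C/X and !_A the unique morphism to it) is an equivalence of categories. -/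
open CategoryTheory Limits

universe v₁ v₂ v₃ u₁ u₂ u₃

namespace SliceFrobAux

set_option linter.unusedSectionVars false

variable {C : Type u₁} [Category.{v₁} C] {D : Type u₂} [Category.{v₂} D]
    [HasFiniteLimits C] [HasFiniteLimits D]
    {SigD : D ⥤ C} {Dstar : C ⥤ D} (adjD : SigD ⊣ Dstar) {X : C}
    {L : Over X ⥤ D} {R : D ⥤ Over X} (adj : L ⊣ R)
    (ov : L ⋙ SigD ≅ Over.forget X)

/-- Naturality of the "over" isomorphism. -/
lemma ov_nat {A B : Over X} (t : A ⟶ B) :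
    SigD.map (L.map t) ≫ (ov.app B).hom = (ov.app A).hom ≫ t.left := by
  simpa using ov.hom.naturality t

/-- The canonical map `L A ⟶ Dstar A.left`. -/
noncomputable def kap (A : Over X) : L.obj A ⟶ Dstar.obj A.left :=
  (adjD.homEquiv _ _) (ov.app A).hom

lemma kap_nat {A B : Over X} (t : A ⟶ B) :
    L.map t ≫ kap adjD ov B = kap adjD ov A ≫ Dstar.map t.left := by
  dsimp only [kap]
  erw [← Adjunction.homEquiv_naturality_left, ← Adjunction.homEquiv_naturality_right]
  exact congrArg _ (ov_nat ov t)

lemma kap_counit (A : Over X) :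
    SigD.map (kap adjD ov A) ≫ adjD.counit.app A.left = (ov.app A).hom := by
  dsimp only [kap]
  exact (adjD.homEquiv _ _).left_inv _

lemma Thom_isIso : IsIso ((⊤_ (Over X)).hom) := by
  have h := Over.w (terminalIsoIsTerminal (Over.mkIdTerminal (X := X))).hom
  rw [← h]
  haveI : IsIso ((terminalIsoIsTerminal (Over.mkIdTerminal (X := X))).hom.left) :=
    (inferInstance :
      IsIso ((Over.forget X).map (terminalIsoIsTerminal (Over.mkIdTerminal (X := X))).hom))
  haveI : IsIso ((Over.mk (𝟙 X)).hom) := (inferInstance : IsIso (𝟙 X))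
  infer_instance

/-- The canonical point `1 ⟶ R (Dstar X)`. -/
noncomputable def sE : (⊤_ (Over X)) ⟶ R.obj (Dstar.obj X) :=
  (adj.homEquiv _ _) (kap adjD ov (⊤_ (Over X)) ≫ Dstar.map (⊤_ (Over X)).hom)

/-- The canonical map `k : L 1 ⟶ Dstar X`. -/
noncomputable def kk : L.obj (⊤_ (Over X)) ⟶ Dstar.obj X :=
  L.map (sE adjD adj ov) ≫ adj.counit.app (Dstar.obj X)

lemma kk_def : kk adjD adj ov = L.map (sE adjD adj ov) ≫ adj.counit.app (Dstar.obj X) := rfl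

lemma kk_eq : kk adjD adj ov
    = kap adjD ov (⊤_ (Over X)) ≫ Dstar.map (⊤_ (Over X)).hom := by
  dsimp only [kk, sE]
  exact (adj.homEquiv _ _).left_inv _

lemma c_eq (A : Over X) :
    L.map (terminal.from A) ≫ kk adjD adj ov = kap adjD ov A ≫ Dstar.map A.hom := by
  rw [kk_eq, ← Category.assoc, kap_nat, Category.assoc, ← Dstar.map_comp, Over.w]

lemma homEquivD_comp_ov (A : Over X) {Z : C} (u : A.left ⟶ Z) :
    (adjD.homEquiv _ _) ((ov.app A).hom ≫ u) = kap adjD ov A ≫ Dstar.map u := by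
  erw [Adjunction.homEquiv_naturality_right]; rfl



section AX

variable (V : Over X)

/-- The unit-like map `V ⟶ R (Dstar V.left)`. -/
noncomputable def etaP : V ⟶ R.obj (Dstar.obj V.left) :=
  (adj.homEquiv _ _) (kap adjD ov V)

lemma etaP_w :
    terminal.from V ≫ sE adjD adj ov = etaP adjD adj ov V ≫ R.map (Dstar.map V.hom) := by
  apply (adj.homEquiv _ _).symm.injective
  rw [Adjunction.homEquiv_naturality_left_symm, Adjunction.homEquiv_naturality_right_symm]
  dsimp only [etaP, sE]
  rw [Equiv.symm_apply_apply, Equiv.symm_apply_apply, ← kk_eq]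
  exact c_eq adjD adj ov V

noncomputable def iotaV : V ⟶ (pullback (sE adjD adj ov) (R.map (Dstar.map V.hom))) :=
  pullback.lift (terminal.from V) (etaP adjD adj ov V) (etaP_w adjD adj ov V)

/-- The counit-like map `(R (Dstar Z)).left ⟶ Z` in `C`. -/
noncomputable def eZ (Z : C) : (R.obj (Dstar.obj Z)).left ⟶ Z :=
  (ov.app (R.obj (Dstar.obj Z))).inv ≫ SigD.map (adj.counit.app (Dstar.obj Z)) ≫
    adjD.counit.app Z

lemma R1 {Z : C} {W : Over X} (q : W ⟶ R.obj (Dstar.obj Z)) :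
    (ov.app W).hom ≫ q.left ≫ eZ adjD adj ov Z
      = SigD.map ((adj.homEquiv _ _).symm q) ≫ adjD.counit.app Z := by
  dsimp only [eZ]
  erw [← Category.assoc, ← ov_nat ov q, Category.assoc, Iso.hom_inv_id_assoc,
    Adjunction.homEquiv_counit, SigD.map_comp, Category.assoc]

lemma counitD_nat {Z Z' : C} (u : Z ⟶ Z') :
    SigD.map (Dstar.map u) ≫ (adjD.counit.app Z' : SigD.obj (Dstar.obj Z') ⟶ Z')
      = (adjD.counit.app Z : SigD.obj (Dstar.obj Z) ⟶ Z) ≫ u := by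
  simpa using adjD.counit.naturality u

lemma kk_counit :
    SigD.map (kk adjD adj ov) ≫ adjD.counit.app X
      = (ov.app (⊤_ (Over X))).hom ≫ (⊤_ (Over X)).hom := by
  rw [kk_eq, SigD.map_comp, Category.assoc]
  have h : SigD.map (Dstar.map (⊤_ (Over X)).hom) ≫ adjD.counit.app X
      = adjD.counit.app (⊤_ (Over X)).left ≫ (⊤_ (Over X)).hom := counitD_nat adjD _
  rw [h, ← Category.assoc, kap_counit]; rfl

lemma symm_snd_pb {Y : D} (f : Y ⟶ Dstar.obj X) :
    (adj.homEquiv _ _).symm (pullback.snd (sE adjD adj ov) (R.map f)) ≫ f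
      = L.map (pullback.fst (sE adjD adj ov) (R.map f)) ≫ kk adjD adj ov := by
  rw [← Adjunction.homEquiv_naturality_right_symm, ← pullback.condition,
    Adjunction.homEquiv_naturality_left_symm]
  dsimp only [sE]
  rw [Equiv.symm_apply_apply, kk_eq]

lemma delta_w :
    ((pullback.snd (sE adjD adj ov) (R.map (Dstar.map V.hom))).left ≫ eZ adjD adj ov V.left)
      ≫ V.hom = ((pullback (sE adjD adj ov) (R.map (Dstar.map V.hom)))).hom := by
  erw [← cancel_epi (ov.app ((pullback (sE adjD adj ov) (R.map (Dstar.map V.hom))))).hom]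
  have h1 := R1 adjD adj ov (Z := V.left)
    (pullback.snd (sE adjD adj ov) (R.map (Dstar.map V.hom)))
  have hfst := ov_nat ov (pullback.fst (sE adjD adj ov) (R.map (Dstar.map V.hom)))
  calc (ov.app ((pullback (sE adjD adj ov) (R.map (Dstar.map V.hom))))).hom
        ≫ ((pullback.snd (sE adjD adj ov) (R.map (Dstar.map V.hom))).left
            ≫ eZ adjD adj ov V.left) ≫ V.hom
      = ((ov.app ((pullback (sE adjD adj ov) (R.map (Dstar.map V.hom))))).hom
          ≫ (pullback.snd (sE adjD adj ov) (R.map (Dstar.map V.hom))).left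
          ≫ eZ adjD adj ov V.left) ≫ V.hom := by
        simp only [Category.assoc]
    _ = SigD.map ((adj.homEquiv (pullback (sE adjD adj ov) (R.map (Dstar.map V.hom)))
            (Dstar.obj V.left)).symm
            (pullback.snd (sE adjD adj ov) (R.map (Dstar.map V.hom))))
          ≫ adjD.counit.app V.left ≫ V.hom := by
        rw [h1, Category.assoc]
    _ = SigD.map ((adj.homEquiv (pullback (sE adjD adj ov) (R.map (Dstar.map V.hom)))
            (Dstar.obj V.left)).symm
            (pullback.snd (sE adjD adj ov) (R.map (Dstar.map V.hom))) ≫ Dstar.map V.hom)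
          ≫ adjD.counit.app X := by
        have h2 : SigD.map (Dstar.map V.hom) ≫ adjD.counit.app X
            = adjD.counit.app V.left ≫ V.hom := counitD_nat adjD _
        rw [← h2, SigD.map_comp, Category.assoc]
    _ = SigD.map (L.map (pullback.fst (sE adjD adj ov) (R.map (Dstar.map V.hom))))
          ≫ SigD.map (kk adjD adj ov) ≫ adjD.counit.app X := by
        rw [symm_snd_pb adjD adj ov, SigD.map_comp, Category.assoc]
    _ = SigD.map (L.map (pullback.fst (sE adjD adj ov) (R.map (Dstar.map V.hom))))
          ≫ (ov.app (⊤_ (Over X))).hom ≫ (⊤_ (Over X)).hom := by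
        rw [kk_counit]
    _ = (ov.app ((pullback (sE adjD adj ov) (R.map (Dstar.map V.hom))))).hom
          ≫ (pullback.fst (sE adjD adj ov) (R.map (Dstar.map V.hom))).left
          ≫ (⊤_ (Over X)).hom := by
        erw [← Category.assoc, hfst, Category.assoc]; rfl
    _ = (ov.app ((pullback (sE adjD adj ov) (R.map (Dstar.map V.hom))))).hom ≫ ((pullback (sE adjD adj ov) (R.map (Dstar.map V.hom)))).hom := by
        erw [Over.w (pullback.fst (sE adjD adj ov) (R.map (Dstar.map V.hom)))]

noncomputable def deltaV : (pullback (sE adjD adj ov) (R.map (Dstar.map V.hom))) ⟶ V :=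
  Over.homMk
    ((pullback.snd (sE adjD adj ov) (R.map (Dstar.map V.hom))).left ≫ eZ adjD adj ov V.left)
    (delta_w adjD adj ov V)

lemma iota_delta : iotaV adjD adj ov V ≫ deltaV adjD adj ov V = 𝟙 V := by
  apply Over.OverMorphism.ext
  rw [Over.comp_left, Over.id_left]
  have hδ : (deltaV adjD adj ov V).left
      = (pullback.snd (sE adjD adj ov) (R.map (Dstar.map V.hom))).left
        ≫ eZ adjD adj ov V.left := rfl
  have h1 : (iotaV adjD adj ov V).left ≫ (pullback.snd (sE adjD adj ov)
      (R.map (Dstar.map V.hom))).left = (etaP adjD adj ov V).left := by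
    rw [← Over.comp_left]
    congr 1
    exact pullback.lift_snd _ _ _
  erw [hδ, ← Category.assoc, h1, ← cancel_epi (ov.app V).hom,
    R1 adjD adj ov (etaP adjD adj ov V)]
  dsimp only [etaP]
  rw [Equiv.symm_apply_apply, kap_counit]
  simp
  exact (Category.comp_id _).symm

lemma delta_iota : deltaV adjD adj ov V ≫ iotaV adjD adj ov V = 𝟙 ((pullback (sE adjD adj ov) (R.map (Dstar.map V.hom)))) := by
  apply pullback.hom_ext
  · exact terminal.hom_ext _ _
  · rw [Category.assoc, Category.id_comp]
    have h0 : iotaV adjD adj ov V ≫ pullback.snd _ _ = etaP adjD adj ov V :=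
      pullback.lift_snd _ _ _
    rw [h0]
    apply (adj.homEquiv _ _).symm.injective
    rw [Adjunction.homEquiv_naturality_left_symm]
    dsimp only [etaP]
    rw [Equiv.symm_apply_apply]
    apply ((adjD.homEquiv _ _).symm).injective
    rw [Adjunction.homEquiv_naturality_left_symm]
    dsimp only [kap]
    erw [Equiv.symm_apply_apply, adjD.homEquiv_counit, ← R1 adjD adj ov, ← Category.assoc,
      ov_nat ov (deltaV adjD adj ov V)]
    exact (Category.assoc _ _ _).symm

lemma iota_isIso : IsIso (iotaV adjD adj ov V) :=
  ⟨deltaV adjD adj ov V, iota_delta adjD adj ov V, delta_iota adjD adj ov V⟩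

end AX


section Chi

variable (V : Over X)

noncomputable def chiV : L.obj V ⟶ pullback (kk adjD adj ov) (Dstar.map V.hom) :=
  pullback.lift (L.map (terminal.from V)) (kap adjD ov V) (c_eq adjD adj ov V)

noncomputable def PsiV : L.obj (pullback (sE adjD adj ov) (R.map (Dstar.map V.hom)))
    ⟶ pullback (kk adjD adj ov) (Dstar.map V.hom) :=
  pullback.lift (L.map (pullback.fst (sE adjD adj ov) (R.map (Dstar.map V.hom))))
    (L.map (pullback.snd (sE adjD adj ov) (R.map (Dstar.map V.hom)))
      ≫ adj.counit.app (Dstar.obj V.left))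
    (by
      rw [kk_def, ← L.map_comp_assoc, pullback.condition, L.map_comp_assoc,
        adj.counit_naturality, Category.assoc])

lemma PsiV_isIso (frob : FrobeniusAt adj (Dstar.obj X)) : IsIso (PsiV adjD adj ov V) :=
  frob (⊤_ (Over X)) (sE adjD adj ov) (Dstar.obj V.left) (Dstar.map V.hom)

lemma chiV_eq : chiV adjD adj ov V = L.map (iotaV adjD adj ov V) ≫ PsiV adjD adj ov V := by
  apply pullback.hom_ext
  · dsimp only [chiV, PsiV]
    rw [pullback.lift_fst, Category.assoc, pullback.lift_fst, ← L.map_comp]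
    congr 1
    exact terminal.hom_ext _ _
  · dsimp only [chiV, PsiV]
    rw [pullback.lift_snd, Category.assoc, pullback.lift_snd, ← L.map_comp_assoc]
    dsimp only [iotaV]
    rw [pullback.lift_snd]
    dsimp only [etaP]
    exact ((adj.homEquiv _ _).left_inv _).symm

lemma chiV_isIso (frob : FrobeniusAt adj (Dstar.obj X)) : IsIso (chiV adjD adj ov V) := by
  haveI := PsiV_isIso adjD adj ov V frob
  haveI := iota_isIso adjD adj ov V
  rw [chiV_eq]
  infer_instance

end Chi

section FF

include adjD adj ov in
lemma F_faithful : (sliceFunctor L).Faithful := by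
  constructor
  intro A B t t' h
  have h1 : L.map t = L.map t' := congrArg CommaMorphism.left h
  apply Over.OverMorphism.ext
  have h2 := ov_nat ov t
  have h3 := ov_nat ov t'
  rw [h1, h3] at h2
  exact ((cancel_epi (ov.app A).hom).mp h2).symm

include adjD adj ov in
lemma F_full (frob : FrobeniusAt adj (Dstar.obj X)) : (sliceFunctor L).Full := by
  constructor
  intro A B u
  obtain ⟨v, hv⟩ : ∃ v : L.obj A ⟶ L.obj B, v = u.left := ⟨u.left, rfl⟩
  have hw : v ≫ L.map (terminal.from B) = L.map (terminal.from A) := by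
    rw [hv]; exact Over.w u
  have hoveq : SigD.map v ≫ (ov.app B).hom ≫ B.hom = (ov.app A).hom ≫ A.hom := by
    apply (adjD.homEquiv _ _).injective
    rw [Adjunction.homEquiv_naturality_left, homEquivD_comp_ov adjD ov,
      homEquivD_comp_ov adjD ov, ← c_eq adjD adj ov, ← c_eq adjD adj ov,
      ← Category.assoc, hw]
  have h5 : SigD.map v ≫ (ov.app B).hom
      = (ov.app A).hom ≫ ((ov.app A).inv ≫ SigD.map v ≫ (ov.app B).hom) := by
    exact (ov.hom_inv_id_app_assoc A _).symm
  have ht : ((ov.app A).inv ≫ SigD.map v ≫ (ov.app B).hom) ≫ B.hom = A.hom := by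
    erw [Category.assoc, Category.assoc]
    erw [hoveq, Iso.inv_hom_id_assoc]
  refine ⟨Over.homMk ((ov.app A).inv ≫ SigD.map v ≫ (ov.app B).hom) ht, ?_⟩
  apply Over.OverMorphism.ext
  show L.map (Over.homMk _ ht) = u.left
  rw [← hv]
  haveI := chiV_isIso adjD adj ov B frob
  rw [← cancel_mono (chiV adjD adj ov B)]
  apply pullback.hom_ext
  · dsimp only [chiV]
    simp only [Category.assoc, pullback.lift_fst]
    rw [← L.map_comp,
      terminal.hom_ext (Over.homMk _ ht ≫ terminal.from B) (terminal.from A), ← hw]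
  · dsimp only [chiV]
    simp only [Category.assoc, pullback.lift_snd]
    rw [kap_nat adjD ov]
    have h6 : v ≫ kap adjD ov B
        = kap adjD ov A ≫ Dstar.map ((ov.app A).inv ≫ SigD.map v ≫ (ov.app B).hom) := by
      dsimp only [kap]
      erw [← Adjunction.homEquiv_naturality_left]
      conv_lhs => erw [h5]
      exact homEquivD_comp_ov adjD ov A _
    rw [h6]
    rfl

end FF

section EssSurj

variable (frob : FrobeniusAt adj (Dstar.obj X))
variable (Bo : Over (L.obj (⊤_ (Over X))))

noncomputable def PsiB :
    L.obj (pullback (sE adjD adj ov) (R.map (Bo.hom ≫ (kk adjD adj ov))))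
      ⟶ pullback (kk adjD adj ov) (Bo.hom ≫ (kk adjD adj ov)) :=
  pullback.lift (L.map (pullback.fst (sE adjD adj ov) (R.map (Bo.hom ≫ (kk adjD adj ov)))))
    (L.map (pullback.snd (sE adjD adj ov) (R.map (Bo.hom ≫ (kk adjD adj ov)))) ≫ adj.counit.app Bo.left)
    (by
      rw [kk_def, ← L.map_comp_assoc, pullback.condition, L.map_comp_assoc,
        adj.counit_naturality, Category.assoc])

include frob in
lemma PsiB_isIso : IsIso (PsiB adjD adj ov Bo) :=
  frob (⊤_ (Over X)) (sE adjD adj ov) Bo.left (Bo.hom ≫ (kk adjD adj ov))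

noncomputable def sB : Bo.left ⟶ L.obj (pullback (sE adjD adj ov) (R.map (Bo.hom ≫ (kk adjD adj ov)))) :=
  haveI := PsiB_isIso adjD adj ov frob Bo
  pullback.lift Bo.hom (𝟙 Bo.left) (by rw [Category.id_comp]) ≫ inv (PsiB adjD adj ov Bo)

lemma sB_fst :
    sB adjD adj ov frob Bo ≫ L.map (pullback.fst (sE adjD adj ov) (R.map (Bo.hom ≫ (kk adjD adj ov))))
      = Bo.hom := by
  haveI := PsiB_isIso adjD adj ov frob Bo
  have h : L.map (pullback.fst (sE adjD adj ov) (R.map (Bo.hom ≫ (kk adjD adj ov))))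
      = PsiB adjD adj ov Bo ≫ pullback.fst (kk adjD adj ov) (Bo.hom ≫ (kk adjD adj ov)) :=
    (pullback.lift_fst _ _ _).symm
  rw [sB, h, Category.assoc, IsIso.inv_hom_id_assoc, pullback.lift_fst]

lemma sB_snd :
    sB adjD adj ov frob Bo ≫ L.map (pullback.snd (sE adjD adj ov) (R.map (Bo.hom ≫ (kk adjD adj ov))))
      ≫ adj.counit.app Bo.left = 𝟙 Bo.left := by
  haveI := PsiB_isIso adjD adj ov frob Bo
  have h : L.map (pullback.snd (sE adjD adj ov) (R.map (Bo.hom ≫ (kk adjD adj ov)))) ≫ adj.counit.app Bo.left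
      = PsiB adjD adj ov Bo ≫ pullback.snd (kk adjD adj ov) (Bo.hom ≫ (kk adjD adj ov)) :=
    (pullback.lift_snd _ _ _).symm
  rw [sB, h, Category.assoc, IsIso.inv_hom_id_assoc, pullback.lift_snd]

lemma sB_term :
    sB adjD adj ov frob Bo
      ≫ L.map (terminal.from (pullback (sE adjD adj ov) (R.map (Bo.hom ≫ (kk adjD adj ov))))) = Bo.hom := by
  rw [← terminal.hom_ext (pullback.fst (sE adjD adj ov) (R.map (Bo.hom ≫ (kk adjD adj ov))))
    (terminal.from _)]
  exact sB_fst adjD adj ov frob Bo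

/-- The underlying map of the comparison `A* ⟶ R B`. -/
noncomputable def thet0 : SigD.obj Bo.left ⟶ (R.obj Bo.left).left :=
  SigD.map (sB adjD adj ov frob Bo) ≫ (ov.app (pullback (sE adjD adj ov) (R.map (Bo.hom ≫ (kk adjD adj ov))))).hom
    ≫ (pullback.snd (sE adjD adj ov) (R.map (Bo.hom ≫ (kk adjD adj ov)))).left

/-- The structure map of the candidate preimage object. -/
noncomputable def hB : SigD.obj Bo.left ⟶ X :=
  SigD.map Bo.hom ≫ (ov.app (⊤_ (Over X))).hom ≫ (⊤_ (Over X)).hom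

lemma homEquivD_hB : (adjD.homEquiv _ _) (hB ov Bo) = Bo.hom ≫ kk adjD adj ov := by
  dsimp only [hB]
  rw [Adjunction.homEquiv_naturality_left]
  have hx : (adjD.homEquiv (L.obj (⊤_ (Over X))) X)
      ((ov.app (⊤_ (Over X))).hom ≫ (⊤_ (Over X)).hom) = kk adjD adj ov := by
    rw [homEquivD_comp_ov adjD ov, ← kk_eq]
  exact congrArg (fun z => Bo.hom ≫ z) hx

lemma theta_w : thet0 adjD adj ov frob Bo ≫ (R.obj Bo.left).hom = hB ov Bo := by
  dsimp only [thet0]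
  simp only [Category.assoc]
  have hsndw : (pullback.snd (sE adjD adj ov) (R.map (Bo.hom ≫ (kk adjD adj ov)))).left ≫ (R.obj Bo.left).hom = (pullback (sE adjD adj ov) (R.map (Bo.hom ≫ (kk adjD adj ov)))).hom := Over.w _
  erw [Category.assoc, hsndw]
  apply (adjD.homEquiv _ _).injective
  rw [Adjunction.homEquiv_naturality_left, homEquivD_comp_ov adjD ov,
    ← c_eq adjD adj ov, ← Category.assoc, sB_term adjD adj ov frob Bo]
  exact (homEquivD_hB adjD adj ov Bo).symm

noncomputable def thetaT : Over.mk (hB ov Bo) ⟶ R.obj Bo.left :=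
  Over.homMk (thet0 adjD adj ov frob Bo) (theta_w adjD adj ov frob Bo)

noncomputable def ell : L.obj (Over.mk (hB ov Bo)) ⟶ Bo.left :=
  L.map (thetaT adjD adj ov frob Bo) ≫ adj.counit.app Bo.left

lemma Sig_ell : SigD.map (ell adjD adj ov frob Bo)
    = (ov.app (Over.mk (hB ov Bo))).hom := by
  dsimp only [ell]
  rw [SigD.map_comp]
  have h1 := ov_nat ov (thetaT adjD adj ov frob Bo)
  have h1' : SigD.map (L.map (thetaT adjD adj ov frob Bo))
      = ((ov.app (Over.mk (hB ov Bo))).hom ≫ thet0 adjD adj ov frob Bo)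
        ≫ (ov.app (R.obj Bo.left)).inv := by
    erw [Iso.eq_comp_inv]
    exact h1
  have h2 : SigD.map (L.map (pullback.snd (sE adjD adj ov) (R.map (Bo.hom ≫ (kk adjD adj ov))))) ≫ (ov.app (R.obj Bo.left)).hom
      = (ov.app (pullback (sE adjD adj ov) (R.map (Bo.hom ≫ (kk adjD adj ov))))).hom ≫ (pullback.snd (sE adjD adj ov) (R.map (Bo.hom ≫ (kk adjD adj ov)))).left := ov_nat ov _
  have h2' : (ov.app (pullback (sE adjD adj ov) (R.map (Bo.hom ≫ (kk adjD adj ov))))).hom ≫ (pullback.snd (sE adjD adj ov) (R.map (Bo.hom ≫ (kk adjD adj ov)))).left ≫ (ov.app (R.obj Bo.left)).inv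
      = SigD.map (L.map (pullback.snd (sE adjD adj ov) (R.map (Bo.hom ≫ (kk adjD adj ov))))) := by
    exact (Category.assoc _ _ _).symm.trans ((Iso.eq_comp_inv _).mpr h2).symm
  calc SigD.map (L.map (thetaT adjD adj ov frob Bo)) ≫ SigD.map (adj.counit.app Bo.left)
      = (ov.app (Over.mk (hB ov Bo))).hom ≫ SigD.map (sB adjD adj ov frob Bo)
          ≫ ((ov.app (pullback (sE adjD adj ov) (R.map (Bo.hom ≫ (kk adjD adj ov))))).hom ≫ (pullback.snd (sE adjD adj ov) (R.map (Bo.hom ≫ (kk adjD adj ov)))).left ≫ (ov.app (R.obj Bo.left)).inv)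
          ≫ SigD.map (adj.counit.app Bo.left) := by
        rw [h1']
        dsimp only [thet0]
        dsimp only [Functor.comp_obj, Over.forget_obj]
        simp only [Category.assoc]
    _ = (ov.app (Over.mk (hB ov Bo))).hom ≫ SigD.map (sB adjD adj ov frob Bo)
          ≫ SigD.map (L.map (pullback.snd (sE adjD adj ov) (R.map (Bo.hom ≫ (kk adjD adj ov))))) ≫ SigD.map (adj.counit.app Bo.left) := by
        rw [h2']
    _ = (ov.app (Over.mk (hB ov Bo))).hom ≫ SigD.map (sB adjD adj ov frob Bo
          ≫ L.map (pullback.snd (sE adjD adj ov) (R.map (Bo.hom ≫ (kk adjD adj ov)))) ≫ adj.counit.app Bo.left) := by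
        simp only [SigD.map_comp, Category.assoc]; rfl
    _ = @id ((L ⋙ SigD).obj (Over.mk (hB ov Bo)) ⟶ SigD.obj Bo.left) (ov.app (Over.mk (hB ov Bo))).hom := by
        rw [sB_snd adjD adj ov frob Bo, SigD.map_id]
        exact Category.comp_id _

noncomputable def nN : (⊤_ (Over X)) ⟶ (pullback (sE adjD adj ov) (R.map (kk adjD adj ov))) :=
  pullback.lift (𝟙 (⊤_ (Over X))) (adj.unit.app (⊤_ (Over X)))
    (by
      rw [Category.id_comp, kk_def]
      exact ((adj.homEquiv _ _).right_inv (sE adjD adj ov)).symm)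

noncomputable def jJ : (pullback (sE adjD adj ov) (R.map (Bo.hom ≫ (kk adjD adj ov)))) ⟶ (pullback (sE adjD adj ov) (R.map (kk adjD adj ov))) :=
  pullback.lift (terminal.from (pullback (sE adjD adj ov) (R.map (Bo.hom ≫ (kk adjD adj ov))))) ((pullback.snd (sE adjD adj ov) (R.map (Bo.hom ≫ (kk adjD adj ov)))) ≫ R.map Bo.hom)
    (by
      rw [Category.assoc, ← R.map_comp, ← pullback.condition,
        ← terminal.hom_ext (pullback.fst (sE adjD adj ov) (R.map (Bo.hom ≫ (kk adjD adj ov)))) (terminal.from _)])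

noncomputable def PsiN : L.obj (pullback (sE adjD adj ov) (R.map (kk adjD adj ov))) ⟶ pullback (kk adjD adj ov) (kk adjD adj ov) :=
  pullback.lift (L.map (pullback.fst (sE adjD adj ov) (R.map (kk adjD adj ov)))) (L.map (pullback.snd (sE adjD adj ov) (R.map (kk adjD adj ov))) ≫ adj.counit.app (L.obj (⊤_ (Over X))))
    (by
      rw [kk_def, ← L.map_comp_assoc, pullback.condition, L.map_comp_assoc,
        adj.counit_naturality, Category.assoc])

include frob in
lemma PsiN_isIso : IsIso (PsiN adjD adj ov) :=
  frob (⊤_ (Over X)) (sE adjD adj ov) (L.obj (⊤_ (Over X))) (kk adjD adj ov)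

lemma sB_snd' : (sB adjD adj ov frob Bo ≫ L.map (pullback.snd (sE adjD adj ov) (R.map (Bo.hom ≫ (kk adjD adj ov))))) ≫ adj.counit.app Bo.left
    = 𝟙 Bo.left := by
  rw [Category.assoc]
  exact sB_snd adjD adj ov frob Bo

lemma a3 : sB adjD adj ov frob Bo ≫ L.map (jJ adjD adj ov Bo)
    = Bo.hom ≫ L.map (nN adjD adj ov) := by
  haveI := PsiN_isIso adjD adj ov frob
  rw [← cancel_mono (PsiN adjD adj ov)]
  have hjf : jJ adjD adj ov Bo ≫ pullback.fst (sE adjD adj ov) (R.map (kk adjD adj ov)) = terminal.from (pullback (sE adjD adj ov) (R.map (Bo.hom ≫ (kk adjD adj ov)))) :=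
    pullback.lift_fst _ _ _
  have hjs : jJ adjD adj ov Bo ≫ pullback.snd (sE adjD adj ov) (R.map (kk adjD adj ov))
      = (pullback.snd (sE adjD adj ov) (R.map (Bo.hom ≫ (kk adjD adj ov)))) ≫ R.map Bo.hom := pullback.lift_snd _ _ _
  have hnf : nN adjD adj ov ≫ pullback.fst (sE adjD adj ov) (R.map (kk adjD adj ov)) = 𝟙 (⊤_ (Over X)) :=
    pullback.lift_fst _ _ _
  have hns : nN adjD adj ov ≫ pullback.snd (sE adjD adj ov) (R.map (kk adjD adj ov))
      = adj.unit.app (⊤_ (Over X)) := pullback.lift_snd _ _ _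
  have hPf : PsiN adjD adj ov ≫ pullback.fst (kk adjD adj ov) (kk adjD adj ov) = L.map (pullback.fst (sE adjD adj ov) (R.map (kk adjD adj ov))) :=
    pullback.lift_fst _ _ _
  have hPs : PsiN adjD adj ov ≫ pullback.snd (kk adjD adj ov) (kk adjD adj ov)
      = L.map (pullback.snd (sE adjD adj ov) (R.map (kk adjD adj ov))) ≫ adj.counit.app (L.obj (⊤_ (Over X))) := pullback.lift_snd _ _ _
  apply pullback.hom_ext
  · simp only [Category.assoc]
    rw [hPf, ← L.map_comp, ← L.map_comp, hjf, hnf]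
    rw [sB_term adjD adj ov frob Bo]
    simp
  · simp only [Category.assoc]
    rw [hPs, ← L.map_comp_assoc, ← L.map_comp_assoc, hjs, hns]
    have hcn : L.map (R.map Bo.hom) ≫ adj.counit.app (L.obj (⊤_ (Over X)))
        = adj.counit.app Bo.left ≫ Bo.hom := adj.counit.naturality Bo.hom
    rw [L.map_comp, Category.assoc, hcn, adj.left_triangle_components]
    conv_lhs => rw [← Category.assoc, ← Category.assoc, sB_snd' adjD adj ov frob Bo]
    simp

lemma EqE : thetaT adjD adj ov frob Bo ≫ R.map Bo.hom
    = terminal.from (Over.mk (hB ov Bo)) ≫ adj.unit.app (⊤_ (Over X)) := by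
  apply Over.OverMorphism.ext
  rw [Over.comp_left, Over.comp_left]
  have hterm : (terminal.from (Over.mk (hB ov Bo))).left
      = SigD.map Bo.hom ≫ (ov.app (⊤_ (Over X))).hom := by
    haveI := Thom_isIso (X := X)
    erw [← cancel_mono ((⊤_ (Over X)).hom), Over.w (terminal.from (Over.mk (hB ov Bo))), Category.assoc]
    rfl
  have hjs : jJ adjD adj ov Bo ≫ pullback.snd (sE adjD adj ov) (R.map (kk adjD adj ov))
      = (pullback.snd (sE adjD adj ov) (R.map (Bo.hom ≫ (kk adjD adj ov)))) ≫ R.map Bo.hom := pullback.lift_snd _ _ _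
  have hj : (jJ adjD adj ov Bo ≫ pullback.snd (sE adjD adj ov) (R.map (kk adjD adj ov))).left
      = (pullback.snd (sE adjD adj ov) (R.map (Bo.hom ≫ (kk adjD adj ov)))).left ≫ (R.map Bo.hom).left := by
    rw [hjs, Over.comp_left]
  have hthet : (thetaT adjD adj ov frob Bo).left ≫ (R.map Bo.hom).left
      = SigD.map (sB adjD adj ov frob Bo) ≫ (ov.app (pullback (sE adjD adj ov) (R.map (Bo.hom ≫ (kk adjD adj ov))))).hom
        ≫ (jJ adjD adj ov Bo ≫ pullback.snd (sE adjD adj ov) (R.map (kk adjD adj ov))).left := by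
    rw [hj]
    show (SigD.map (sB adjD adj ov frob Bo) ≫ (ov.app (pullback (sE adjD adj ov) (R.map (Bo.hom ≫ (kk adjD adj ov))))).hom ≫ (pullback.snd (sE adjD adj ov) (R.map (Bo.hom ≫ (kk adjD adj ov)))).left)
        ≫ (R.map Bo.hom).left = _
    erw [Category.assoc, Category.assoc]; rfl
  rw [hthet, Over.comp_left]
  have hovj := ov_nat ov (jJ adjD adj ov Bo)
  erw [← Category.assoc ((ov.app (pullback (sE adjD adj ov) (R.map (Bo.hom ≫ (kk adjD adj ov))))).hom), ← hovj]
  erw [← Category.assoc, ← Category.assoc, ← SigD.map_comp, a3 adjD adj ov frob Bo,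
    SigD.map_comp]
  have hovn := ov_nat ov (nN adjD adj ov)
  dsimp only [Functor.comp_obj, Over.forget_obj] at hovn hterm ⊢
  simp only [Category.assoc]
  rw [reassoc_of% hovn, hterm]
  have hns : nN adjD adj ov ≫ pullback.snd (sE adjD adj ov) (R.map (kk adjD adj ov))
      = adj.unit.app (⊤_ (Over X)) := pullback.lift_snd _ _ _
  erw [← Over.comp_left, hns]
  erw [Category.assoc]

lemma b_ell : ell adjD adj ov frob Bo ≫ Bo.hom = L.map (terminal.from (Over.mk (hB ov Bo))) := by
  dsimp only [ell]
  have hcn : adj.counit.app Bo.left ≫ Bo.hom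
      = L.map (R.map Bo.hom) ≫ adj.counit.app (L.obj (⊤_ (Over X))) :=
    (adj.counit_naturality Bo.hom).symm
  rw [Category.assoc, hcn, ← Category.assoc, ← L.map_comp, EqE adjD adj ov frob Bo,
    L.map_comp, Category.assoc, adj.left_triangle_components]
  exact Category.comp_id _

lemma ell_mu : ell adjD adj ov frob Bo ≫ adjD.unit.app Bo.left
    = kap adjD ov (Over.mk (hB ov Bo)) := by
  have hn := adjD.unit.naturality (ell adjD adj ov frob Bo)
  dsimp at hn
  rw [hn, Sig_ell adjD adj ov frob Bo]
  dsimp only [kap]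
  erw [Adjunction.homEquiv_unit]

noncomputable def nuB : Bo.left ⟶ pullback (kk adjD adj ov) (Dstar.map (Over.mk (hB ov Bo)).hom) :=
  pullback.lift Bo.hom (adjD.unit.app Bo.left)
    (by
      rw [← homEquivD_hB adjD adj ov Bo]
      exact Adjunction.homEquiv_unit adjD Bo.left X (hB ov Bo))

noncomputable def chiInv : pullback (kk adjD adj ov) (Dstar.map (Over.mk (hB ov Bo)).hom) ⟶ L.obj (Over.mk (hB ov Bo)) :=
  haveI := chiV_isIso adjD adj ov (Over.mk (hB ov Bo)) frob
  inv (chiV adjD adj ov (Over.mk (hB ov Bo)))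

lemma chi_hom_inv : chiV adjD adj ov (Over.mk (hB ov Bo)) ≫ chiInv adjD adj ov frob Bo
    = 𝟙 (L.obj (Over.mk (hB ov Bo))) := by
  haveI := chiV_isIso adjD adj ov (Over.mk (hB ov Bo)) frob
  exact IsIso.hom_inv_id _

lemma chi_inv_hom : chiInv adjD adj ov frob Bo ≫ chiV adjD adj ov (Over.mk (hB ov Bo))
    = 𝟙 (pullback (kk adjD adj ov) (Dstar.map (Over.mk (hB ov Bo)).hom)) := by
  haveI := chiV_isIso adjD adj ov (Over.mk (hB ov Bo)) frob
  exact IsIso.inv_hom_id _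

lemma lemI : ell adjD adj ov frob Bo ≫ nuB adjD adj ov Bo = chiV adjD adj ov (Over.mk (hB ov Bo)) := by
  apply pullback.hom_ext
  · dsimp only [nuB, chiV]
    rw [Category.assoc, pullback.lift_fst, pullback.lift_fst]
    exact b_ell adjD adj ov frob Bo
  · dsimp only [nuB, chiV]
    rw [Category.assoc, pullback.lift_snd, pullback.lift_snd]
    exact ell_mu adjD adj ov frob Bo

lemma lemE1 : (nuB adjD adj ov Bo ≫ chiInv adjD adj ov frob Bo)
      ≫ L.map (thetaT adjD adj ov frob Bo)
    = sB adjD adj ov frob Bo ≫ L.map (pullback.snd (sE adjD adj ov) (R.map (Bo.hom ≫ (kk adjD adj ov)))) := by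
  haveI := chiV_isIso adjD adj ov (R.obj Bo.left) frob
  rw [← cancel_mono (chiV adjD adj ov (R.obj Bo.left))]
  have hterm1 : thetaT adjD adj ov frob Bo ≫ terminal.from (R.obj Bo.left)
      = terminal.from (Over.mk (hB ov Bo)) := terminal.hom_ext _ _
  have hterm2 : (pullback.snd (sE adjD adj ov) (R.map (Bo.hom ≫ (kk adjD adj ov)))) ≫ terminal.from (R.obj Bo.left)
      = terminal.from (pullback (sE adjD adj ov) (R.map (Bo.hom ≫ (kk adjD adj ov)))) := terminal.hom_ext _ _
  have hcf : chiV adjD adj ov (R.obj Bo.left)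
      ≫ pullback.fst (kk adjD adj ov) (Dstar.map (R.obj Bo.left).hom)
      = L.map (terminal.from (R.obj Bo.left)) := pullback.lift_fst _ _ _
  have hcs : chiV adjD adj ov (R.obj Bo.left)
      ≫ pullback.snd (kk adjD adj ov) (Dstar.map (R.obj Bo.left).hom)
      = kap adjD ov (R.obj Bo.left) := pullback.lift_snd _ _ _
  have hcBf : chiV adjD adj ov (Over.mk (hB ov Bo)) ≫ pullback.fst (kk adjD adj ov) (Dstar.map (Over.mk (hB ov Bo)).hom)
      = L.map (terminal.from (Over.mk (hB ov Bo))) := pullback.lift_fst _ _ _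
  have hcBs : chiV adjD adj ov (Over.mk (hB ov Bo)) ≫ pullback.snd (kk adjD adj ov) (Dstar.map (Over.mk (hB ov Bo)).hom)
      = kap adjD ov (Over.mk (hB ov Bo)) := pullback.lift_snd _ _ _
  apply pullback.hom_ext
  · simp only [Category.assoc]
    rw [hcf, ← L.map_comp, ← L.map_comp, hterm1, hterm2]
    rw [← hcBf]
    rw [reassoc_of% (chi_inv_hom adjD adj ov frob Bo)]
    dsimp only [nuB]
    rw [pullback.lift_fst]
    exact (sB_term adjD adj ov frob Bo).symm
  · simp only [Category.assoc]
    have hknT : L.map (thetaT adjD adj ov frob Bo) ≫ kap adjD ov (R.obj Bo.left)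
        = kap adjD ov (Over.mk (hB ov Bo)) ≫ Dstar.map (thetaT adjD adj ov frob Bo).left :=
      kap_nat adjD ov _
    have hknS : L.map (pullback.snd (sE adjD adj ov) (R.map (Bo.hom ≫ (kk adjD adj ov)))) ≫ kap adjD ov (R.obj Bo.left)
        = kap adjD ov (pullback (sE adjD adj ov) (R.map (Bo.hom ≫ (kk adjD adj ov)))) ≫ Dstar.map (pullback.snd (sE adjD adj ov) (R.map (Bo.hom ≫ (kk adjD adj ov)))).left := kap_nat adjD ov _
    rw [hcs, hknT, hknS]
    rw [← hcBs]
    simp only [Category.assoc]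
    rw [reassoc_of% (chi_inv_hom adjD adj ov frob Bo)]
    dsimp only [nuB]
    rw [pullback.lift_snd_assoc]
    have hR : sB adjD adj ov frob Bo ≫ kap adjD ov (pullback (sE adjD adj ov) (R.map (Bo.hom ≫ (kk adjD adj ov)))) ≫ Dstar.map (pullback.snd (sE adjD adj ov) (R.map (Bo.hom ≫ (kk adjD adj ov)))).left
        = (adjD.homEquiv Bo.left _) (SigD.map (sB adjD adj ov frob Bo)
            ≫ (ov.app (pullback (sE adjD adj ov) (R.map (Bo.hom ≫ (kk adjD adj ov))))).hom ≫ (pullback.snd (sE adjD adj ov) (R.map (Bo.hom ≫ (kk adjD adj ov)))).left) := by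
      dsimp only [kap]
      erw [← Adjunction.homEquiv_naturality_right, ← Adjunction.homEquiv_naturality_left]; rfl
    rw [hR]
    exact (Adjunction.homEquiv_unit adjD Bo.left _ _).symm

lemma lemII : (nuB adjD adj ov Bo ≫ chiInv adjD adj ov frob Bo)
    ≫ ell adjD adj ov frob Bo = 𝟙 Bo.left := by
  dsimp only [ell]
  rw [← Category.assoc, lemE1 adjD adj ov frob Bo, Category.assoc]
  exact sB_snd adjD adj ov frob Bo

lemma ell_isIso : IsIso (ell adjD adj ov frob Bo) := by
  refine ⟨nuB adjD adj ov Bo ≫ chiInv adjD adj ov frob Bo, ?_, lemII adjD adj ov frob Bo⟩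
  rw [← Category.assoc, lemI adjD adj ov frob Bo]
  exact chi_hom_inv adjD adj ov frob Bo

include adjD adj ov frob in
lemma essSurj_aux : ∃ A : Over X, Nonempty ((sliceFunctor L).obj A ≅ Bo) := by
  haveI := ell_isIso adjD adj ov frob Bo
  exact ⟨Over.mk (hB ov Bo),
    ⟨Over.isoMk (@asIso _ _ _ _ (ell adjD adj ov frob Bo) this) (b_ell adjD adj ov frob Bo)⟩⟩

end EssSurj


end SliceFrobAux

/-- If `L ⊣ R` (with `L : C/X ⥤ D`) is over `C` (i.e. `Σ_D ∘ L ≅ Σ_X`) and is Frobenius at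
`D*(X)`, then the canonical functor `C/X ⥤ D/L(1)` is an equivalence. -/
theorem sliceFunctor_isEquivalence_of_over_of_frobeniusAt
    {C : Type u₁} [Category.{v₁} C] {D : Type u₂} [Category.{v₂} D]
    [HasFiniteLimits C] [HasFiniteLimits D]
    {SigD : D ⥤ C} {Dstar : C ⥤ D} (adjD : SigD ⊣ Dstar) (X : C)
    {L : Over X ⥤ D} {R : D ⥤ Over X} (adj : L ⊣ R)
    (hover : L ⋙ SigD ≅ Over.forget X)
    (frob : FrobeniusAt adj (Dstar.obj X)) :
    (sliceFunctor L).IsEquivalence := by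
  haveI : (sliceFunctor L).Faithful := SliceFrobAux.F_faithful adjD adj hover
  haveI : (sliceFunctor L).Full := SliceFrobAux.F_full adjD adj hover frob
  haveI : (sliceFunctor L).EssSurj := by
    constructor
    intro Bo
    obtain ⟨A, ⟨e⟩⟩ := SliceFrobAux.essSurj_aux adjD adj hover frob Bo
    exact ⟨A, ⟨e⟩⟩
  exact {}
end

section
/- Let C and D be cartesian categories, let Σ_D ⊣ D* be an adjunction with Σ_D : D ⥤ C, let X be an object of C, and for i = 1, 2 let L_i ⊣ R_i be adjunctions with L_i : C/X ⥤ D that are over C, i.e., equipped with natural isomorphisms τ_i : Σ_D ∘ L_i ≅ Σ_X (Σ_X : C/X ⥤ C the forgetful functor), each Frobenius at the object D*(X) of D. Let ψ_i : L_i(1) ⟶ D*(X) be the adjoint transpose across Σ_D ⊣ D* of the isomorphism (τ_i)_1 : Σ_D(L_i(1)) ≅ X. Then there is a bijection between morphisms from (L_1(1), ψ_1) to (L_2(1), ψ_2) in the slice category D/D*(X) and natural transformations α : L_1 ⟶ L_2 that are over C, i.e., such that (τ_1) = (τ_2) ∘ (Σ_D applied to α) as natural transformations Σ_D ∘ L_1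 ⟶ Σ_X. -/
open CategoryTheory Limits

universe v₁ v₂ v₃ u₁ u₂ u₃

set_option linter.unusedSectionVars false

namespace FrobeniusAux

variable {C : Type u₁} [Category.{v₁} C] {D : Type u₂} [Category.{v₂} D]
    [HasFiniteLimits C] [HasFiniteLimits D]
    {SigD : D ⥤ C} {Dstar : C ⥤ D} (adjD : SigD ⊣ Dstar) (X : C)
    {L : Over X ⥤ D} {R : D ⥤ Over X} (adj : L ⊣ R)
    (τ : L ⋙ SigD ≅ Over.forget X)

/-- The adjoint transpose of `τ` at `A`. -/
def lam (A : Over X) : L.obj A ⟶ Dstar.obj A.left :=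
  adjD.homEquiv (L.obj A) A.left (τ.hom.app A)

lemma lam_symm (A : Over X) :
    (adjD.homEquiv (L.obj A) A.left).symm (lam adjD X τ A) = τ.hom.app A :=
  Equiv.symm_apply_apply _ _

lemma lam_natural {B A : Over X} (m : B ⟶ A) :
    L.map m ≫ lam adjD X τ A = lam adjD X τ B ≫ Dstar.map m.left := by
  rw [lam, lam]
  exact (adjD.homEquiv_naturality_left _ _).symm.trans
    ((congrArg (adjD.homEquiv _ _) (τ.hom.naturality m)).trans
      (adjD.homEquiv_naturality_right _ _))

/-- ψ, the adjoint transpose of `τ` at the terminal object. -/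
def psi : L.obj (Over.mk (𝟙 X)) ⟶ Dstar.obj X :=
  adjD.homEquiv (L.obj (Over.mk (𝟙 X))) X (τ.hom.app (Over.mk (𝟙 X)))

lemma lam_top : lam adjD X τ (Over.mk (𝟙 X)) = psi adjD X τ := rfl

lemma psi_symm :
    (adjD.homEquiv (L.obj (Over.mk (𝟙 X))) X).symm (psi adjD X τ) =
      τ.hom.app (Over.mk (𝟙 X)) :=
  Equiv.symm_apply_apply _ _

/-- The transpose of ψ. -/
def g : Over.mk (𝟙 X) ⟶ R.obj (Dstar.obj X) :=
  adj.homEquiv (Over.mk (𝟙 X)) (Dstar.obj X) (psi adjD X τ)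

lemma g_symm :
    (adj.homEquiv (Over.mk (𝟙 X)) (Dstar.obj X)).symm (g adjD X adj τ) = psi adjD X τ :=
  Equiv.symm_apply_apply _ _

/-- The terminal map. -/
def tm (A : Over X) : A ⟶ Over.mk (𝟙 X) := Over.homMk A.hom

lemma tm_eq {A : Over X} (f : A ⟶ Over.mk (𝟙 X)) : f = tm X A :=
  Over.mkIdTerminal.hom_ext f _

/-- The unit-style map `A ⟶ R (D* A.left)`. -/
def u (A : Over X) : A ⟶ R.obj (Dstar.obj A.left) :=
  adj.homEquiv A (Dstar.obj A.left) (lam adjD X τ A)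

lemma u_symm (A : Over X) :
    (adj.homEquiv A (Dstar.obj A.left)).symm (u adjD X adj τ A) = lam adjD X τ A :=
  Equiv.symm_apply_apply _ _

lemma u_natural {B A : Over X} (m : B ⟶ A) :
    m ≫ u adjD X adj τ A = u adjD X adj τ B ≫ R.map (Dstar.map m.left) := by
  rw [u, u, ← adj.homEquiv_naturality_right, ← lam_natural, adj.homEquiv_naturality_left]

lemma u_top : u adjD X adj τ (Over.mk (𝟙 X)) = g adjD X adj τ := rfl

lemma u_w (A : Over X) :
    u adjD X adj τ A ≫ R.map (Dstar.map A.hom) = tm X A ≫ g adjD X adj τ := by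
  have h := u_natural adjD X adj τ (tm X A)
  rw [u_top] at h
  exact h.symm

/-- The comparison map `A ⟶ 1 ×_{R D*X} R D*(A.left)`. -/
noncomputable def t (A : Over X) :
    A ⟶ pullback (g adjD X adj τ) (R.map (Dstar.map A.hom)) :=
  pullback.lift (tm X A) (u adjD X adj τ A) (u_w adjD X adj τ A).symm

/-- Underlying map of the inverse comparison map. -/
noncomputable def sleft (A : Over X) :
    (pullback (g adjD X adj τ) (R.map (Dstar.map A.hom))).left ⟶ A.left :=
  τ.inv.app _ ≫ (adjD.homEquiv _ _).symm ((adj.homEquiv _ _).symm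
    (pullback.snd (g adjD X adj τ) (R.map (Dstar.map A.hom))))

lemma sw (A : Over X) :
    sleft adjD X adj τ A ≫ A.hom =
      (pullback (g adjD X adj τ) (R.map (Dstar.map A.hom))).hom := by
  have c1 := congrArg (adj.homEquiv _ _).symm
    (pullback.condition (f := g adjD X adj τ) (g := R.map (Dstar.map A.hom)))
  rw [adj.homEquiv_naturality_left_symm, adj.homEquiv_naturality_right_symm,
    g_symm] at c1
  have c2 := congrArg (adjD.homEquiv _ _).symm c1
  rw [adjD.homEquiv_naturality_left_symm, adjD.homEquiv_naturality_right_symm,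
    psi_symm] at c2
  have n := τ.hom.naturality (pullback.fst (g adjD X adj τ) (R.map (Dstar.map A.hom)))
  simp only [Functor.comp_map, Over.forget_map] at n
  have wfst : (pullback.fst (g adjD X adj τ) (R.map (Dstar.map A.hom))).left =
      (pullback (g adjD X adj τ) (R.map (Dstar.map A.hom))).hom := by
    have := Over.w (pullback.fst (g adjD X adj τ) (R.map (Dstar.map A.hom)))
    simpa using this
  rw [sleft]
  erw [Category.assoc, ← c2, n, ← Category.assoc, Iso.inv_hom_id_app]
  simp only [Over.forget_obj, Category.id_comp]
  exact wfst

/-- The inverse comparison map. -/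
noncomputable def s (A : Over X) :
    pullback (g adjD X adj τ) (R.map (Dstar.map A.hom)) ⟶ A :=
  Over.homMk (sleft adjD X adj τ A) (sw adjD X adj τ A)

lemma s_left (A : Over X) : (s adjD X adj τ A).left = sleft adjD X adj τ A := rfl

lemma t_s (A : Over X) : t adjD X adj τ A ≫ s adjD X adj τ A = 𝟙 A := by
  apply Over.OverMorphism.ext
  rw [Over.comp_left, Over.id_left, s_left]
  have n := τ.inv.naturality (t adjD X adj τ A)
  simp only [Functor.comp_map, Over.forget_map] at n
  have key : SigD.map (L.map (t adjD X adj τ A)) ≫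
      (adjD.homEquiv (L.obj (pullback (g adjD X adj τ) (R.map (Dstar.map A.hom)))) A.left).symm
      ((adj.homEquiv (pullback (g adjD X adj τ) (R.map (Dstar.map A.hom)))
          (Dstar.obj A.left)).symm
        (pullback.snd (g adjD X adj τ) (R.map (Dstar.map A.hom)))) =
      τ.hom.app A := by
    rw [← adjD.homEquiv_naturality_left_symm, ← adj.homEquiv_naturality_left_symm,
      t, pullback.lift_snd, u_symm, lam_symm]
  rw [sleft]
  erw [← Category.assoc, n, Category.assoc, key, Iso.inv_hom_id_app]
  rfl

lemma s_u (A : Over X) :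
    s adjD X adj τ A ≫ u adjD X adj τ A =
      pullback.snd (g adjD X adj τ) (R.map (Dstar.map A.hom)) := by
  rw [u_natural]
  apply (adj.homEquiv _ _).symm.injective
  rw [adj.homEquiv_naturality_right_symm, u_symm]
  apply (adjD.homEquiv _ _).symm.injective
  rw [adjD.homEquiv_naturality_right_symm, lam_symm]
  rw [s_left, sleft]
  erw [← Category.assoc, Iso.hom_inv_id_app]
  simp only [Functor.comp_obj, Category.id_comp]

lemma s_t (A : Over X) :
    s adjD X adj τ A ≫ t adjD X adj τ A = 𝟙 _ := by
  apply pullback.hom_ext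
  · exact Over.mkIdTerminal.hom_ext _ _
  · rw [Category.assoc, t, pullback.lift_snd, s_u, Category.id_comp]

lemma t_isIso (A : Over X) : IsIso (t adjD X adj τ A) :=
  ⟨s adjD X adj τ A, t_s adjD X adj τ A, s_t adjD X adj τ A⟩

/-- The base map of the pullbacks in `D`. -/
noncomputable def chi : L.obj (Over.mk (𝟙 X)) ⟶ Dstar.obj X :=
  L.map (g adjD X adj τ) ≫ adj.counit.app (Dstar.obj X)

lemma chi_eq : chi adjD X adj τ = psi adjD X τ := by
  rw [chi, ← adj.homEquiv_counit, g, Equiv.symm_apply_apply]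

/-- The Frobenius comparison map. -/
noncomputable def F (A : Over X) :
    L.obj (pullback (g adjD X adj τ) (R.map (Dstar.map A.hom))) ⟶
      pullback (chi adjD X adj τ) (Dstar.map A.hom) :=
  pullback.lift (L.map (pullback.fst (g adjD X adj τ) (R.map (Dstar.map A.hom))))
    (L.map (pullback.snd (g adjD X adj τ) (R.map (Dstar.map A.hom))) ≫
      adj.counit.app (Dstar.obj A.left))
    (by rw [chi, ← L.map_comp_assoc, pullback.condition, L.map_comp_assoc,
          adj.counit_naturality, Category.assoc])

lemma F_isIso (frob : FrobeniusAt adj (Dstar.obj X)) (A : Over X) :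
    IsIso (F adjD X adj τ A) :=
  frob (Over.mk (𝟙 X)) (g adjD X adj τ) (Dstar.obj A.left) (Dstar.map A.hom)

/-- The canonical iso `L A ≅ L1 ×_{D*X} D*(A.left)`. -/
noncomputable def k (A : Over X) :
    L.obj A ⟶ pullback (chi adjD X adj τ) (Dstar.map A.hom) :=
  L.map (t adjD X adj τ A) ≫ F adjD X adj τ A

lemma k_isIso (frob : FrobeniusAt adj (Dstar.obj X)) (A : Over X) :
    IsIso (k adjD X adj τ A) := by
  haveI := t_isIso adjD X adj τ A
  haveI := F_isIso adjD X adj τ frob A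
  exact IsIso.comp_isIso

lemma k_fst (A : Over X) :
    k adjD X adj τ A ≫ pullback.fst (chi adjD X adj τ) (Dstar.map A.hom) =
      L.map (tm X A) := by
  rw [k, Category.assoc, F, pullback.lift_fst, ← L.map_comp, t, pullback.lift_fst]

lemma k_snd (A : Over X) :
    k adjD X adj τ A ≫ pullback.snd (chi adjD X adj τ) (Dstar.map A.hom) =
      lam adjD X τ A := by
  rw [k, Category.assoc, F, pullback.lift_snd, ← Category.assoc, ← L.map_comp, t,
    pullback.lift_snd]
  exact (adj.homEquiv_counit _ _ _).symm.trans (u_symm adjD X adj τ A)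

/-- Functorial action on the pullbacks. -/
noncomputable def Qmap {B A : Over X} (m : B ⟶ A) :
    pullback (chi adjD X adj τ) (Dstar.map B.hom) ⟶
      pullback (chi adjD X adj τ) (Dstar.map A.hom) :=
  pullback.lift (pullback.fst _ _) (pullback.snd _ _ ≫ Dstar.map m.left)
    (by rw [Category.assoc, ← Dstar.map_comp, Over.w m, pullback.condition])

lemma k_natural {B A : Over X} (m : B ⟶ A) :
    L.map m ≫ k adjD X adj τ A = k adjD X adj τ B ≫ Qmap adjD X adj τ m := by
  apply pullback.hom_ext
  · rw [Category.assoc, k_fst, ← L.map_comp, Category.assoc, Qmap, pullback.lift_fst,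
      k_fst]
    congr 1
    exact tm_eq X _
  · rw [Category.assoc, k_snd, lam_natural, Category.assoc, Qmap, pullback.lift_snd,
      ← Category.assoc, k_snd]

section Two

variable {L₂ : Over X ⥤ D} {R₂ : D ⥤ Over X} (adj₂ : L₂ ⊣ R₂)
    (τ₂ : L₂ ⋙ SigD ≅ Over.forget X)

lemma over_iff (α : L ⟶ L₂) :
    Functor.whiskerRight α SigD ≫ τ₂.hom = τ.hom ↔
      ∀ A, α.app A ≫ lam adjD X τ₂ A = lam adjD X τ A := by
  constructor
  · intro hα A
    have h1 := NatTrans.congr_app hα A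
    simp only [NatTrans.comp_app, Functor.whiskerRight_app] at h1
    have h2 := adjD.homEquiv_naturality_left (α.app A)
      (show SigD.obj (L₂.obj A) ⟶ A.left from τ₂.hom.app A)
    rw [lam, lam, ← h2]
    exact congrArg _ h1
  · intro hα
    ext A
    have h2 := adjD.homEquiv_naturality_left (α.app A)
      (show SigD.obj (L₂.obj A) ⟶ A.left from τ₂.hom.app A)
    have h3 := hα A
    rw [lam, lam, ← h2] at h3
    have h4 := (adjD.homEquiv _ _).injective h3
    simpa using h4

/-- The map between the two pullbacks induced by `h`. -/
noncomputable def Hmap (h : L.obj (Over.mk (𝟙 X)) ⟶ L₂.obj (Over.mk (𝟙 X)))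
    (hw : h ≫ psi adjD X τ₂ = psi adjD X τ) (A : Over X) :
    pullback (chi adjD X adj τ) (Dstar.map A.hom) ⟶
      pullback (chi adjD X adj₂ τ₂) (Dstar.map A.hom) :=
  pullback.lift (pullback.fst _ _ ≫ h) (pullback.snd _ _)
    (by rw [Category.assoc, chi_eq adjD X adj₂ τ₂, hw, ← chi_eq adjD X adj τ,
          pullback.condition])

lemma Hmap_natural (h : L.obj (Over.mk (𝟙 X)) ⟶ L₂.obj (Over.mk (𝟙 X)))
    (hw : h ≫ psi adjD X τ₂ = psi adjD X τ) {B A : Over X} (m : B ⟶ A) :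
    Qmap adjD X adj τ m ≫ Hmap adjD X adj τ adj₂ τ₂ h hw A =
      Hmap adjD X adj τ adj₂ τ₂ h hw B ≫ Qmap adjD X adj₂ τ₂ m := by
  apply pullback.hom_ext
  · simp only [Category.assoc, Hmap, Qmap, pullback.lift_fst, pullback.lift_fst_assoc]
  · simp only [Category.assoc, Hmap, Qmap, pullback.lift_snd, pullback.lift_snd_assoc]

/-- The iso version of `k`. -/
noncomputable def kIso (frob : FrobeniusAt adj (Dstar.obj X)) (A : Over X) :
    L.obj A ≅ pullback (chi adjD X adj τ) (Dstar.map A.hom) :=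
  haveI := k_isIso adjD X adj τ frob A
  asIso (k adjD X adj τ A)

lemma kIso_hom (frob : FrobeniusAt adj (Dstar.obj X)) (A : Over X) :
    (kIso adjD X adj τ frob A).hom = k adjD X adj τ A := rfl

/-- The natural transformation induced by `h`. -/
noncomputable def natOf (frob : FrobeniusAt adj (Dstar.obj X))
    (frob₂ : FrobeniusAt adj₂ (Dstar.obj X))
    (h : L.obj (Over.mk (𝟙 X)) ⟶ L₂.obj (Over.mk (𝟙 X)))
    (hw : h ≫ psi adjD X τ₂ = psi adjD X τ) : L ⟶ L₂ where
  app A := (kIso adjD X adj τ frob A).hom ≫ Hmap adjD X adj τ adj₂ τ₂ h hw A ≫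
    (kIso adjD X adj₂ τ₂ frob₂ A).inv
  naturality B A m := by
    have e1 := k_natural adjD X adj τ m
    have e2 := k_natural adjD X adj₂ τ₂ m
    have e3 := Hmap_natural adjD X adj τ adj₂ τ₂ h hw m
    rw [← cancel_mono (kIso adjD X adj₂ τ₂ frob₂ A).hom]
    simp only [Category.assoc, Iso.inv_hom_id, Category.comp_id]
    rw [kIso_hom, kIso_hom, kIso_hom adjD X adj₂ τ₂ frob₂ A, e2,
      ← kIso_hom adjD X adj₂ τ₂ frob₂ B, Iso.inv_hom_id_assoc,
      ← Category.assoc, e1, Category.assoc, e3]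

lemma natOf_app (frob : FrobeniusAt adj (Dstar.obj X))
    (frob₂ : FrobeniusAt adj₂ (Dstar.obj X))
    (h : L.obj (Over.mk (𝟙 X)) ⟶ L₂.obj (Over.mk (𝟙 X)))
    (hw : h ≫ psi adjD X τ₂ = psi adjD X τ) (A : Over X) :
    (natOf adjD X adj τ adj₂ τ₂ frob frob₂ h hw).app A =
      (kIso adjD X adj τ frob A).hom ≫ Hmap adjD X adj τ adj₂ τ₂ h hw A ≫
        (kIso adjD X adj₂ τ₂ frob₂ A).inv := rfl

lemma natOf_app_k (frob : FrobeniusAt adj (Dstar.obj X))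
    (frob₂ : FrobeniusAt adj₂ (Dstar.obj X))
    (h : L.obj (Over.mk (𝟙 X)) ⟶ L₂.obj (Over.mk (𝟙 X)))
    (hw : h ≫ psi adjD X τ₂ = psi adjD X τ) (A : Over X) :
    (natOf adjD X adj τ adj₂ τ₂ frob frob₂ h hw).app A ≫ k adjD X adj₂ τ₂ A =
      k adjD X adj τ A ≫ Hmap adjD X adj τ adj₂ τ₂ h hw A := by
  rw [natOf_app, Category.assoc, Category.assoc, ← kIso_hom adjD X adj₂ τ₂ frob₂ A,
    Iso.inv_hom_id, Category.comp_id, kIso_hom]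

lemma natOf_lam (frob : FrobeniusAt adj (Dstar.obj X))
    (frob₂ : FrobeniusAt adj₂ (Dstar.obj X))
    (h : L.obj (Over.mk (𝟙 X)) ⟶ L₂.obj (Over.mk (𝟙 X)))
    (hw : h ≫ psi adjD X τ₂ = psi adjD X τ) (A : Over X) :
    (natOf adjD X adj τ adj₂ τ₂ frob frob₂ h hw).app A ≫ lam adjD X τ₂ A =
      lam adjD X τ A := by
  rw [← k_snd adjD X adj₂ τ₂ A, ← Category.assoc, natOf_app_k, Category.assoc, Hmap,
    pullback.lift_snd, k_snd]

lemma k_fst_top :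
    k adjD X adj τ (Over.mk (𝟙 X)) ≫
      pullback.fst (chi adjD X adj τ) (Dstar.map (Over.mk (𝟙 X)).hom) = 𝟙 _ := by
  rw [k_fst, ← tm_eq X (𝟙 (Over.mk (𝟙 X))), L.map_id]

lemma natOf_app_top (frob : FrobeniusAt adj (Dstar.obj X))
    (frob₂ : FrobeniusAt adj₂ (Dstar.obj X))
    (h : L.obj (Over.mk (𝟙 X)) ⟶ L₂.obj (Over.mk (𝟙 X)))
    (hw : h ≫ psi adjD X τ₂ = psi adjD X τ) :
    (natOf adjD X adj τ adj₂ τ₂ frob frob₂ h hw).app (Over.mk (𝟙 X)) = h := by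
  have e : k adjD X adj τ (Over.mk (𝟙 X)) ≫
      Hmap adjD X adj τ adj₂ τ₂ h hw (Over.mk (𝟙 X)) =
      h ≫ k adjD X adj₂ τ₂ (Over.mk (𝟙 X)) := by
    apply pullback.hom_ext
    · rw [Category.assoc, Hmap, pullback.lift_fst, ← Category.assoc, k_fst_top,
        Category.id_comp, Category.assoc, k_fst_top, Category.comp_id]
    · rw [Category.assoc, Hmap, pullback.lift_snd, k_snd, Category.assoc, k_snd,
        lam_top, lam_top, hw]
  rw [natOf_app, ← Category.assoc, Iso.comp_inv_eq, kIso_hom, kIso_hom, e]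

lemma natOf_eq (frob : FrobeniusAt adj (Dstar.obj X))
    (frob₂ : FrobeniusAt adj₂ (Dstar.obj X)) (α : L ⟶ L₂)
    (hα : ∀ A, α.app A ≫ lam adjD X τ₂ A = lam adjD X τ A)
    (h : L.obj (Over.mk (𝟙 X)) ⟶ L₂.obj (Over.mk (𝟙 X)))
    (hh : h = α.app (Over.mk (𝟙 X)))
    (hw : h ≫ psi adjD X τ₂ = psi adjD X τ) :
    natOf adjD X adj τ adj₂ τ₂ frob frob₂ h hw = α := by
  subst hh
  ext A
  have key : k adjD X adj τ A ≫ Hmap adjD X adj τ adj₂ τ₂ _ hw A =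
      α.app A ≫ k adjD X adj₂ τ₂ A := by
    apply pullback.hom_ext
    · rw [Category.assoc, Hmap, pullback.lift_fst, ← Category.assoc, k_fst,
        Category.assoc, k_fst, α.naturality]
    · rw [Category.assoc, Hmap, pullback.lift_snd, k_snd, Category.assoc, k_snd, hα]
  rw [natOf_app, kIso_hom, ← Category.assoc, key, Category.assoc,
    ← kIso_hom adjD X adj₂ τ₂ frob₂ A, Iso.hom_inv_id, Category.comp_id]

end Two

end FrobeniusAux

/-- Given two adjunctions `L_i ⊣ R_i : C/X ⇄ D` over `C` (via `τ_i : Σ_D ∘ L_i ≅ Σ_X`), each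
Frobenius at `D*(X)`, there is a bijection between morphisms `(L₁ 1, ψ₁) ⟶ (L₂ 1, ψ₂)` in
`D/D*(X)` (where `ψ_i` is the adjoint transpose across `Σ_D ⊣ D*` of `(τ_i)_1`) and natural
transformations `L₁ ⟶ L₂` over `C`. -/
theorem hom_equiv_natTrans_over
    {C : Type u₁} [Category.{v₁} C] {D : Type u₂} [Category.{v₂} D]
    [HasFiniteLimits C] [HasFiniteLimits D]
    {SigD : D ⥤ C} {Dstar : C ⥤ D} (adjD : SigD ⊣ Dstar) (X : C)
    {L₁ : Over X ⥤ D} {R₁ : D ⥤ Over X} (adj₁ : L₁ ⊣ R₁)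
    {L₂ : Over X ⥤ D} {R₂ : D ⥤ Over X} (adj₂ : L₂ ⊣ R₂)
    (τ₁ : L₁ ⋙ SigD ≅ Over.forget X) (τ₂ : L₂ ⋙ SigD ≅ Over.forget X)
    (frob₁ : FrobeniusAt adj₁ (Dstar.obj X)) (frob₂ : FrobeniusAt adj₂ (Dstar.obj X)) :
    Nonempty
      ((Over.mk ((adjD.homEquiv (L₁.obj (Over.mk (𝟙 X))) X) (τ₁.hom.app (Over.mk (𝟙 X)))) ⟶
          Over.mk ((adjD.homEquiv (L₂.obj (Over.mk (𝟙 X))) X) (τ₂.hom.app (Over.mk (𝟙 X))))) ≃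
        {α : L₁ ⟶ L₂ // Functor.whiskerRight α SigD ≫ τ₂.hom = τ₁.hom}) := by
  refine ⟨{
    toFun := fun h =>
      ⟨FrobeniusAux.natOf adjD X adj₁ τ₁ adj₂ τ₂ frob₁ frob₂ h.left (by simpa [FrobeniusAux.psi] using Over.w h),
        (FrobeniusAux.over_iff adjD X τ₁ τ₂ _).mpr
          (FrobeniusAux.natOf_lam adjD X adj₁ τ₁ adj₂ τ₂ frob₁ frob₂ h.left _)⟩
    invFun := fun α => Over.homMk (α.1.app (Over.mk (𝟙 X)))
      (by
        have hl := (FrobeniusAux.over_iff adjD X τ₁ τ₂ α.1).mp α.2 (Over.mk (𝟙 X))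
        rw [FrobeniusAux.lam_top, FrobeniusAux.lam_top] at hl
        simpa [FrobeniusAux.psi] using hl)
    left_inv := fun h => by
      apply Over.OverMorphism.ext
      simpa using FrobeniusAux.natOf_app_top adjD X adj₁ τ₁ adj₂ τ₂ frob₁ frob₂ h.left
        (by simpa [FrobeniusAux.psi] using Over.w h)
    right_inv := fun α => by
      apply Subtype.ext
      exact FrobeniusAux.natOf_eq adjD X adj₁ τ₁ adj₂ τ₂ frob₁ frob₂ α.1
        ((FrobeniusAux.over_iff adjD X τ₁ τ₂ α.1).mp α.2) _ rfl _ }⟩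
end

section
/- Let R : C ⥤ D and R' : D ⥤ D' be functors, each possessing a left adjoint. If R' reflects isomorphisms and the composite R' ∘ R : C ⥤ D' is monadic, then R is monadic. -/
open CategoryTheory Limits

universe v₁ v₂ v₃ u₁ u₂ u₃

/-!
We first reproduce the contents of `Mathlib.CategoryTheory.Monad.Monadicity` (Beck's monadicity
theorems) with fully general universes (the mathlib version requires the two categories to have
the same morphism universe). The content below is copied verbatim from mathlib, with only the
universe constraint relaxed and names placed in a fresh namespace `MyMonad`.
-/

namespace CategoryTheory

namespace MyMonad
open Monad

open Limits

noncomputable section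

-- Hide the implementation details in this namespace.
namespace MyXI

variable {C : Type u₁} {D : Type u₂}
variable [Category.{v₁} C] [Category.{v₂} D]
variable {G : D ⥤ C} {F : C ⥤ D} (adj : F ⊣ G)

/-- The "main pair" for an algebra `(A, α)` is the pair of morphisms `(F α, ε_FA)`. It is always a
reflexive pair, and will be used to construct the left adjoint to the comparison functor and show it
is an equivalence.
-/
instance main_pair_reflexive (A : adj.toMonad.Algebra) :
    IsReflexivePair (F.map A.a) (adj.counit.app (F.obj A.A)) := by
  apply IsReflexivePair.mk' (F.map (adj.unit.app _)) _ _
  · erw [← F.map_comp, ← F.map_id]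
    exact congr_arg F.map A.unit
  · erw [adj.left_triangle_components]

/-- The "main pair" for an algebra `(A, α)` is the pair of morphisms `(F α, ε_FA)`. It is always a
`G`-split pair, and will be used to construct the left adjoint to the comparison functor and show it
is an equivalence.
-/
instance main_pair_G_split (A : adj.toMonad.Algebra) :
    G.IsSplitPair (F.map A.a)
      (adj.counit.app (F.obj A.A)) where
  splittable := ⟨_, _, ⟨beckSplitCoequalizer A⟩⟩

/-- The object function for the left adjoint to the comparison functor. -/
def comparisonLeftAdjointObj (A : adj.toMonad.Algebra)
    [HasCoequalizer (F.map A.a) (adj.counit.app _)] : D :=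
  coequalizer (F.map A.a) (adj.counit.app _)

set_option linter.unusedVariables false in
/--
We have a bijection of homsets which will be used to construct the left adjoint to the comparison
functor.
-/
@[simps!]
def comparisonLeftAdjointHomEquiv (A : adj.toMonad.Algebra) (B : D)
    [HasCoequalizer (F.map A.a) (adj.counit.app (F.obj A.A))] :
    (comparisonLeftAdjointObj adj A ⟶ B) ≃ (A ⟶ (comparison adj).obj B) :=
  calc
    (comparisonLeftAdjointObj adj A ⟶ B) ≃ { f : F.obj A.A ⟶ B // _ } :=
      Cofork.IsColimit.homIso (colimit.isColimit _) B
    _ ≃ { g : A.A ⟶ G.obj B // G.map (F.map g) ≫ G.map (adj.counit.app B) = A.a ≫ g } := by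
      refine (adj.homEquiv _ _).subtypeEquiv ?_
      intro f
      erw [← (adj.homEquiv _ _).injective.eq_iff, Adjunction.homEquiv_naturality_left,
        adj.homEquiv_unit, adj.homEquiv_unit, G.map_comp]
      dsimp
      erw [adj.right_triangle_components_assoc, ← G.map_comp, F.map_comp, Category.assoc,
        adj.counit_naturality, adj.left_triangle_components_assoc]
      apply eq_comm
    _ ≃ (A ⟶ (comparison adj).obj B) :=
      { toFun := fun g =>
          { f := _
            h := g.prop }
        invFun := fun f => ⟨f.f, f.h⟩
        left_inv := fun g => by ext; rfl
        right_inv := fun f => by ext; rfl }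

/-- Construct the adjunction to the comparison functor.
-/
def leftAdjointComparison
    [∀ A : adj.toMonad.Algebra, HasCoequalizer (F.map A.a)
      (adj.counit.app (F.obj A.A))] :
    adj.toMonad.Algebra ⥤ D := by
  refine
    Adjunction.leftAdjointOfEquiv (G := comparison adj)
      (F_obj := fun A => comparisonLeftAdjointObj adj A) (fun A B => ?_) ?_
  · apply comparisonLeftAdjointHomEquiv
  · intro A B B' g h
    ext1
    -- Porting note: the goal was previously closed by the following, which succeeds until
    -- `Category.assoc`.
    -- dsimp [comparisonLeftAdjointHomEquiv]
    -- rw [← adj.homEquiv_naturality_right, Category.assoc]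
    exact (congrArg (adj.homEquiv _ _) (Category.assoc _ _ _).symm).trans
      (adj.homEquiv_naturality_right _ _)

/-- Provided we have the appropriate coequalizers, we have an adjunction to the comparison functor.
-/
@[simps! counit]
def comparisonAdjunction
    [∀ A : adj.toMonad.Algebra, HasCoequalizer (F.map A.a)
      (adj.counit.app (F.obj A.A))] :
    leftAdjointComparison adj ⊣ comparison adj :=
  Adjunction.adjunctionOfEquivLeft _ _

variable {adj}

theorem comparisonAdjunction_unit_f_aux
    [∀ A : adj.toMonad.Algebra, HasCoequalizer (F.map A.a)
      (adj.counit.app (F.obj A.A))]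
    (A : adj.toMonad.Algebra) :
    ((comparisonAdjunction adj).unit.app A).f =
      adj.homEquiv A.A _
        (coequalizer.π (F.map A.a) (adj.counit.app (F.obj A.A))) :=
  congr_arg (adj.homEquiv _ _) (Category.comp_id _)

/-- This is a cofork which is helpful for establishing monadicity: the morphism from the Beck
coequalizer to this cofork is the unit for the adjunction on the comparison functor.
-/
@[simps! pt]
def unitCofork (A : adj.toMonad.Algebra)
    [HasCoequalizer (F.map A.a) (adj.counit.app (F.obj A.A))] :
    Cofork (G.map (F.map A.a)) (G.map (adj.counit.app (F.obj A.A))) :=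
  Cofork.ofπ (G.map (coequalizer.π (F.map A.a) (adj.counit.app (F.obj A.A))))
    (by
      change _ = G.map _ ≫ _
      erw [← G.map_comp, coequalizer.condition, G.map_comp])

@[simp]
theorem unitCofork_π (A : adj.toMonad.Algebra)
    [HasCoequalizer (F.map A.a) (adj.counit.app (F.obj A.A))] :
    (unitCofork A).π = G.map (coequalizer.π (F.map A.a) (adj.counit.app (F.obj A.A))) :=
  rfl

theorem comparisonAdjunction_unit_f
    [∀ A : adj.toMonad.Algebra, HasCoequalizer (F.map A.a)
      (adj.counit.app (F.obj A.A))]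
    (A : adj.toMonad.Algebra) :
    ((comparisonAdjunction adj).unit.app A).f = (beckCoequalizer A).desc (unitCofork A) := by
  apply Limits.Cofork.IsColimit.hom_ext (beckCoequalizer A)
  erw [Cofork.IsColimit.π_desc]
  dsimp only [beckCofork_π, unitCofork_π]
  erw [comparisonAdjunction_unit_f_aux, ← adj.homEquiv_naturality_left A.a, coequalizer.condition,
    adj.homEquiv_naturality_right, adj.homEquiv_unit, Category.assoc]
  apply adj.right_triangle_components_assoc

variable (adj)

/-- The cofork which describes the counit of the adjunction: the morphism from the coequalizer of
this pair to this morphism is the counit.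
-/
@[simps!]
def counitCofork (B : D) :
    Cofork (F.map (G.map (adj.counit.app B)))
      (adj.counit.app (F.obj (G.obj B))) :=
  Cofork.ofπ (adj.counit.app B) (adj.counit_naturality _)

variable {adj} in
/-- The unit cofork is a colimit provided `G` preserves it. -/
def unitColimitOfPreservesCoequalizer (A : adj.toMonad.Algebra)
    [HasCoequalizer (F.map A.a) (adj.counit.app (F.obj A.A))]
    [PreservesColimit (parallelPair (F.map A.a) (adj.counit.app (F.obj A.A))) G] :
    IsColimit (unitCofork (G := G) A) :=
  isColimitOfHasCoequalizerOfPreservesColimit G _ _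

/-- The counit cofork is a colimit provided `G` reflects it. -/
def counitCoequalizerOfReflectsCoequalizer (B : D)
    [ReflectsColimit (parallelPair (F.map (G.map (adj.counit.app B)))
      (adj.counit.app (F.obj (G.obj B)))) G] :
    IsColimit (counitCofork (adj := adj) B) :=
  isColimitOfIsColimitCoforkMap G _ (beckCoequalizer ((comparison adj).obj B))

-- Porting note: Lean 3 didn't seem to need this
instance
    [∀ A : adj.toMonad.Algebra, HasCoequalizer (F.map A.a) (adj.counit.app (F.obj A.A))]
    (B : D) : HasColimit (parallelPair
      (F.map (G.map (NatTrans.app adj.counit B)))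
      (NatTrans.app adj.counit (F.obj (G.obj B)))) :=
  inferInstanceAs <| HasCoequalizer
    (F.map ((comparison adj).obj B).a)
    (adj.counit.app (F.obj ((comparison adj).obj B).A))

theorem comparisonAdjunction_counit_app
    [∀ A : adj.toMonad.Algebra, HasCoequalizer (F.map A.a) (adj.counit.app (F.obj A.A))] (B : D) :
    (comparisonAdjunction adj).counit.app B = colimit.desc _ (counitCofork adj B) := by
  apply coequalizer.hom_ext
  refine (Cofork.IsColimit.desc' (colimit.isColimit _) _ _).2.trans ?_
  refine Eq.trans ?_ (colimit.ι_desc (counitCofork adj B) WalkingParallelPair.one).symm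
  refine (adj.homEquiv_counit (g := 𝟙 (G.obj B))).trans ?_
  simp

end MyXI

open CategoryTheory Adjunction Monad MyXI

variable {C : Type u₁} {D : Type u₂}
variable [Category.{v₁} C] [Category.{v₂} D]
variable {G : D ⥤ C} {F : C ⥤ D} (adj : F ⊣ G)

variable (G) in
/--
If `G` is monadic, it creates colimits of `G`-split pairs. This is the "boring" direction of Beck's
monadicity theorem, the converse is given in `monadicOfCreatesGSplitCoequalizers`.
-/
def createsGSplitCoequalizersOfMonadic [MonadicRightAdjoint G] ⦃A B⦄ (f g : A ⟶ B)
    [G.IsSplitPair f g] : CreatesColimit (parallelPair f g) G := by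
  apply (config := {allowSynthFailures := true}) monadicCreatesColimitOfPreservesColimit
    -- Porting note: oddly (config := {allowSynthFailures := true}) had no effect here and below
  all_goals
    apply @preservesColimit_of_iso_diagram _ _ _ _ _ _ _ _ _ (diagramIsoParallelPair _).symm ?_
    dsimp
    infer_instance

section BeckMonadicity

-- Porting note: added these to replace parametric instances https://github.com/leanprover/lean4/issues/2311
-- When this is fixed the proofs below that struggle with instances should be reviewed.
-- [∀ ⦃A B⦄ (f g : A ⟶ B) [G.IsSplitPair f g], HasCoequalizer f g]
class HasCoequalizerOfIsSplitPair (G : D ⥤ C) : Prop where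
  out : ∀ {A B} (f g : A ⟶ B) [G.IsSplitPair f g], HasCoequalizer f g

-- Porting note: cannot find synth order
-- instance {A B} (f g : A ⟶ B) [G.IsSplitPair f g] [HasCoequalizerOfIsSplitPair G] :
--     HasCoequalizer f g := HasCoequalizerOfIsSplitPair.out f g

instance [HasCoequalizerOfIsSplitPair G] : ∀ (A : Algebra adj.toMonad),
    HasCoequalizer (F.map A.a)
      (adj.counit.app (F.obj A.A)) :=
  fun _ => HasCoequalizerOfIsSplitPair.out G _ _

-- Porting note: added these to replace parametric instances https://github.com/leanprover/lean4/issues/2311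
-- [∀ ⦃A B⦄ (f g : A ⟶ B) [G.IsSplitPair f g], PreservesColimit (parallelPair f g) G]
class PreservesColimitOfIsSplitPair (G : D ⥤ C) where
  out : ∀ {A B} (f g : A ⟶ B) [G.IsSplitPair f g], PreservesColimit (parallelPair f g) G

instance {A B} (f g : A ⟶ B) [G.IsSplitPair f g] [PreservesColimitOfIsSplitPair G] :
    PreservesColimit (parallelPair f g) G := PreservesColimitOfIsSplitPair.out f g

instance [PreservesColimitOfIsSplitPair G] : ∀ (A : Algebra adj.toMonad),
   PreservesColimit (parallelPair (F.map A.a)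
      (NatTrans.app adj.counit (F.obj A.A))) G :=
  fun _ => PreservesColimitOfIsSplitPair.out _ _

-- Porting note: added these to replace parametric instances https://github.com/leanprover/lean4/issues/2311
-- [∀ ⦃A B⦄ (f g : A ⟶ B) [G.IsSplitPair f g], ReflectsColimit (parallelPair f g) G] :
class ReflectsColimitOfIsSplitPair (G : D ⥤ C) where
  out : ∀ {A B} (f g : A ⟶ B) [G.IsSplitPair f g], ReflectsColimit (parallelPair f g) G

instance {A B} (f g : A ⟶ B) [G.IsSplitPair f g] [ReflectsColimitOfIsSplitPair G] :
    ReflectsColimit (parallelPair f g) G := ReflectsColimitOfIsSplitPair.out f g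

instance [ReflectsColimitOfIsSplitPair G] : ∀ (A : Algebra adj.toMonad),
    ReflectsColimit (parallelPair (F.map A.a)
      (NatTrans.app adj.counit (F.obj A.A))) G :=
  fun _ => ReflectsColimitOfIsSplitPair.out _ _

/-- To show `G` is a monadic right adjoint, we can show it preserves and reflects `G`-split
coequalizers, and `D` has them.
-/
def monadicOfHasPreservesReflectsGSplitCoequalizers [HasCoequalizerOfIsSplitPair G]
    [PreservesColimitOfIsSplitPair G] [ReflectsColimitOfIsSplitPair G] :
    MonadicRightAdjoint G where
  L := F
  adj := adj
  eqv := by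
    have : ∀ (X : Algebra adj.toMonad), IsIso ((comparisonAdjunction adj).unit.app X) := by
      intro X
      apply @isIso_of_reflects_iso _ _ _ _ _ _ _ (Monad.forget adj.toMonad) ?_ _
      · change IsIso ((comparisonAdjunction adj).unit.app X).f
        rw [comparisonAdjunction_unit_f]
        change
          IsIso
            (IsColimit.coconePointUniqueUpToIso (beckCoequalizer X)
                (unitColimitOfPreservesCoequalizer X)).hom
        exact (IsColimit.coconePointUniqueUpToIso _ _).isIso_hom
    have : ∀ (Y : D), IsIso ((comparisonAdjunction adj).counit.app Y) := by
      intro Y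
      rw [comparisonAdjunction_counit_app]
      -- Porting note: passing instances through
      change IsIso (IsColimit.coconePointUniqueUpToIso _ ?_).hom
      infer_instance
      -- Porting note: passing instances through
      apply @counitCoequalizerOfReflectsCoequalizer _ _ _ _ _ _ _ _ ?_
      letI _ :
        G.IsSplitPair (F.map (G.map (adj.counit.app Y)))
          (adj.counit.app (F.obj (G.obj Y))) :=
        MyXI.main_pair_G_split _ ((comparison adj).obj Y)
      infer_instance
    exact (comparisonAdjunction adj).toEquivalence.isEquivalence_inverse

-- Porting note: added these to replace parametric instances https://github.com/leanprover/lean4/issues/2311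
-- [∀ ⦃A B⦄ (f g : A ⟶ B) [G.IsSplitPair f g], CreatesColimit (parallelPair f g) G] :
class CreatesColimitOfIsSplitPair (G : D ⥤ C) where
  out : ∀ {A B} (f g : A ⟶ B) [G.IsSplitPair f g], CreatesColimit (parallelPair f g) G

instance {A B} (f g : A ⟶ B) [G.IsSplitPair f g] [CreatesColimitOfIsSplitPair G] :
    CreatesColimit (parallelPair f g) G := CreatesColimitOfIsSplitPair.out f g

instance [CreatesColimitOfIsSplitPair G] : ∀ (A : Algebra adj.toMonad),
    CreatesColimit (parallelPair (F.map A.a)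
      (NatTrans.app adj.counit (F.obj A.A))) G :=
  fun _ => CreatesColimitOfIsSplitPair.out _ _

/--
Beck's monadicity theorem. If `G` has a left adjoint and creates coequalizers of `G`-split pairs,
then it is monadic.
This is the converse of `createsGSplitCoequalizersOfMonadic`.
-/
def monadicOfCreatesGSplitCoequalizers [CreatesColimitOfIsSplitPair G] :
    MonadicRightAdjoint G := by
  let I {A B} (f g : A ⟶ B) [G.IsSplitPair f g] : HasColimit (parallelPair f g ⋙ G) := by
    apply @hasColimit_of_iso _ _ _ _ _ _ ?_ (diagramIsoParallelPair _)
    exact inferInstanceAs <| HasCoequalizer (G.map f) (G.map g)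
  have : HasCoequalizerOfIsSplitPair G := ⟨fun _ _ => hasColimit_of_created (parallelPair _ _) G⟩
  have : PreservesColimitOfIsSplitPair G := ⟨by intros; infer_instance⟩
  have : ReflectsColimitOfIsSplitPair G := ⟨by intros; infer_instance⟩
  exact monadicOfHasPreservesReflectsGSplitCoequalizers adj

/-- An alternate version of Beck's monadicity theorem. If `G` reflects isomorphisms, preserves
coequalizers of `G`-split pairs and `C` has coequalizers of `G`-split pairs, then it is monadic.
-/
def monadicOfHasPreservesGSplitCoequalizersOfReflectsIsomorphisms [G.ReflectsIsomorphisms]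
    [HasCoequalizerOfIsSplitPair G] [PreservesColimitOfIsSplitPair G] :
    MonadicRightAdjoint G := by
  have : ReflectsColimitOfIsSplitPair G := ⟨fun f g _ => by
    have := HasCoequalizerOfIsSplitPair.out G f g
    apply reflectsColimit_of_reflectsIsomorphisms⟩
  apply monadicOfHasPreservesReflectsGSplitCoequalizers adj

end BeckMonadicity

section ReflexiveMonadicity

variable [HasReflexiveCoequalizers D] [G.ReflectsIsomorphisms]

-- Porting note: added these to replace parametric instances https://github.com/leanprover/lean4/issues/2311
-- [∀ ⦃A B⦄ (f g : A ⟶ B) [G.IsReflexivePair f g], PreservesColimit (parallelPair f g) G] :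
class PreservesColimitOfIsReflexivePair (G : C ⥤ D) where
  out : ∀ ⦃A B⦄ (f g : A ⟶ B) [IsReflexivePair f g], PreservesColimit (parallelPair f g) G

instance {A B} (f g : A ⟶ B) [IsReflexivePair f g] [PreservesColimitOfIsReflexivePair G] :
  PreservesColimit (parallelPair f g) G := PreservesColimitOfIsReflexivePair.out f g

instance [PreservesColimitOfIsReflexivePair G] : ∀ X : Algebra adj.toMonad,
    PreservesColimit (parallelPair (F.map X.a)
      (NatTrans.app adj.counit (F.obj X.A))) G :=
 fun _ => PreservesColimitOfIsReflexivePair.out _ _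

variable [PreservesColimitOfIsReflexivePair G]

/-- Reflexive (crude) monadicity theorem. If `G` has a right adjoint, `D` has and `G` preserves
reflexive coequalizers and `G` reflects isomorphisms, then `G` is monadic.
-/
def monadicOfHasPreservesReflexiveCoequalizersOfReflectsIsomorphisms : MonadicRightAdjoint G where
  L := F
  adj := adj
  eqv := by
    haveI : ∀ A : adj.toMonad.Algebra, HasCoequalizer (F.map A.a) (adj.counit.app (F.obj A.A)) :=
      fun A => HasReflexiveCoequalizers.has_coeq _ _
    have : ∀ (X : Algebra adj.toMonad), IsIso ((comparisonAdjunction adj).unit.app X) := by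
      intro X
      apply
        @isIso_of_reflects_iso _ _ _ _ _ _ _ (Monad.forget adj.toMonad) ?_ _
      · change IsIso ((comparisonAdjunction adj).unit.app X).f
        rw [comparisonAdjunction_unit_f]
        exact (IsColimit.coconePointUniqueUpToIso (beckCoequalizer X)
          (unitColimitOfPreservesCoequalizer X)).isIso_hom
    have : ∀ (Y : D), IsIso ((comparisonAdjunction adj).counit.app Y) := by
      intro Y
      rw [comparisonAdjunction_counit_app]
      -- Porting note: passing instances through
      change IsIso (IsColimit.coconePointUniqueUpToIso _ ?_).hom
      infer_instance
      -- Porting note: passing instances through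
      apply @counitCoequalizerOfReflectsCoequalizer _ _ _ _ _ _ _ _ ?_
      apply reflectsColimit_of_reflectsIsomorphisms
    exact (comparisonAdjunction adj).toEquivalence.isEquivalence_inverse

end ReflexiveMonadicity

end

end MyMonad

end CategoryTheory

section

variable {C : Type u₁} [Category.{v₁} C] {D : Type u₂} [Category.{v₂} D]

/-- Any functor preserves colimits of parallel pairs admitting a split coequalizer. -/
lemma preservesColimit_parallelPair_of_hasSplitCoequalizer
    {X Y : C} (f g : X ⟶ Y) [HasSplitCoequalizer f g] (F : C ⥤ D) :
    PreservesColimit (parallelPair f g) F := by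
  have t := HasSplitCoequalizer.isSplitCoequalizer f g
  apply preservesColimit_of_preserves_colimit_cocone t.isCoequalizer
  exact (isColimitMapCoconeCoforkEquiv F t.condition).symm (t.map F).isCoequalizer

end

/-- Monadicity descends: if `R` and `R'` have left adjoints, `R'` reflects isomorphisms, and
`R' ∘ R` is monadic, then `R` is monadic. -/
theorem monadic_of_comp_monadic_of_reflectsIsomorphisms
    {C : Type u₁} [Category.{v₁} C] {D : Type u₂} [Category.{v₂} D]
    {D' : Type u₃} [Category.{v₃} D']
    (R : C ⥤ D) (R' : D ⥤ D')
    [R.IsRightAdjoint] [R'.IsRightAdjoint] [R'.ReflectsIsomorphisms]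
    [MonadicRightAdjoint (R ⋙ R')] :
    Nonempty (MonadicRightAdjoint R) := by
  -- `R ⋙ R'` reflects isomorphisms, since it is (up to iso) the composition of the comparison
  -- equivalence with the forgetful functor of the Eilenberg-Moore category.
  haveI hRR' : (R ⋙ R').ReflectsIsomorphisms := by
    haveI : (Monad.comparison (monadicAdjunction (R ⋙ R'))).IsEquivalence :=
      MonadicRightAdjoint.eqv
    constructor
    intro X Y f hf
    rw [← NatIso.isIso_map_iff (Monad.comparisonForget (monadicAdjunction (R ⋙ R'))) f] at hf
    exact isIso_of_reflects_iso f
      (Monad.comparison (monadicAdjunction (R ⋙ R')) ⋙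
        (monadicAdjunction (R ⋙ R')).toMonad.forget)
  haveI hR : R.ReflectsIsomorphisms := reflectsIsomorphisms_of_comp R R'
  -- an `R`-split pair is an `(R ⋙ R')`-split pair
  have key : ∀ {A B : C} (f g : A ⟶ B), R.IsSplitPair f g → (R ⋙ R').IsSplitPair f g := by
    intro A B f g h
    exact inferInstanceAs (HasSplitCoequalizer (R'.map (R.map f)) (R'.map (R.map g)))
  haveI : CategoryTheory.MyMonad.HasCoequalizerOfIsSplitPair R := by
    constructor
    intro A B f g hsplit
    haveI := key f g hsplit
    haveI : CreatesColimit (parallelPair f g) (R ⋙ R') :=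
      CategoryTheory.MyMonad.createsGSplitCoequalizersOfMonadic (G := R ⋙ R') f g
    haveI : HasColimit (parallelPair f g ⋙ (R ⋙ R')) := by
      apply @hasColimit_of_iso _ _ _ _ _ _ ?_ (diagramIsoParallelPair _)
      exact inferInstanceAs <| HasCoequalizer ((R ⋙ R').map f) ((R ⋙ R').map g)
    exact hasColimit_of_created (parallelPair f g) (R ⋙ R')
  haveI : CategoryTheory.MyMonad.PreservesColimitOfIsSplitPair R := by
    constructor
    intro A B f g hsplit
    haveI := key f g hsplit
    haveI : CreatesColimit (parallelPair f g) (R ⋙ R') :=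
      CategoryTheory.MyMonad.createsGSplitCoequalizersOfMonadic (G := R ⋙ R') f g
    haveI : HasColimit (parallelPair f g ⋙ (R ⋙ R')) := by
      apply @hasColimit_of_iso _ _ _ _ _ _ ?_ (diagramIsoParallelPair _)
      exact inferInstanceAs <| HasCoequalizer ((R ⋙ R').map f) ((R ⋙ R').map g)
    -- `R ⋙ R'` preserves the coequalizer of `(f, g)` since it creates it
    haveI : PreservesColimit (parallelPair f g) (R ⋙ R') := inferInstance
    -- `R'` preserves the (split) coequalizer of `(R f, R g)`, ...
    haveI : PreservesColimit (parallelPair (R.map f) (R.map g)) R' :=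
      preservesColimit_parallelPair_of_hasSplitCoequalizer _ _ R'
    -- ... hence, reflecting isomorphisms, it reflects this coequalizer
    haveI : ReflectsColimit (parallelPair (R.map f) (R.map g)) R' :=
      reflectsColimit_of_reflectsIsomorphisms _ _
    haveI : ReflectsColimit (parallelPair ((parallelPair f g ⋙ R).map WalkingParallelPairHom.left)
        ((parallelPair f g ⋙ R).map WalkingParallelPairHom.right)) R' := by
      show ReflectsColimit (parallelPair (R.map f) (R.map g)) R'
      infer_instance
    haveI : ReflectsColimit (parallelPair f g ⋙ R) R' :=
      reflectsColimit_of_iso_diagram R' (diagramIsoParallelPair _).symm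
    exact preservesColimit_of_reflects_of_preserves R R'
  exact ⟨CategoryTheory.MyMonad.monadicOfHasPreservesGSplitCoequalizersOfReflectsIsomorphisms
    (Adjunction.ofIsRightAdjoint R)⟩
end

section
/- Let C be a cartesian category. Every split epimorphism f : X ⟶ Y in C is an effective descent morphism, i.e., the pullback functor f* : C/Y ⥤ C/X is monadic. -/
open CategoryTheory Limits

universe v₁ v₂ v₃ u₁ u₂ u₃

/-- Transport a split coequalizer of images along a natural isomorphism of functors. -/
def CategoryTheory.IsSplitCoequalizer.ofNatIso {A : Type u₂} {B : Type u₃} [Category.{v₂} A]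
    [Category.{v₃} B] {H K : A ⥤ B} (e : H ≅ K) {M N : A} {u v : M ⟶ N} {Z : B}
    {π : H.obj N ⟶ Z} (q : IsSplitCoequalizer (H.map u) (H.map v) π) :
    IsSplitCoequalizer (K.map u) (K.map v) (e.inv.app N ≫ π) where
  rightSection := q.rightSection ≫ e.hom.app N
  leftSection := e.inv.app N ≫ q.leftSection ≫ e.hom.app M
  condition := by
    rw [e.inv.naturality_assoc, e.inv.naturality_assoc, q.condition]
  rightSection_π := by
    rw [Category.assoc, Iso.hom_inv_id_app_assoc, q.rightSection_π]
  leftSection_bottom := by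
    rw [Category.assoc, Category.assoc, ← e.hom.naturality, q.leftSection_bottom_assoc,
      Iso.inv_hom_id_app]
  leftSection_top := by
    rw [Category.assoc, Category.assoc, ← e.hom.naturality, q.leftSection_top_assoc, Category.assoc]

/-- A morphism `f : X ⟶ Y` of a cartesian category is an effective descent morphism if the
pullback functor `f* : C/Y ⥤ C/X` is monadic. -/
def EffectiveDescentMorphism {C : Type u₁} [Category.{v₁} C] [HasFiniteLimits C]
    {X Y : C} (f : X ⟶ Y) : Prop :=
  Nonempty (MonadicRightAdjoint (Over.pullback f))

/-- Every split epimorphism in a cartesian category is an effective descent morphism. -/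
theorem effectiveDescentMorphism_of_isSplitEpi
    {C : Type u₁} [Category.{v₁} C] [HasFiniteLimits C]
    {X Y : C} (f : X ⟶ Y) (hf : IsSplitEpi f) :
    EffectiveDescentMorphism f := by
  obtain ⟨s, hs⟩ := hf
  -- the composite `pullback f ⋙ pullback s` is isomorphic to the identity
  let e : Over.pullback f ⋙ Over.pullback s ≅ 𝟭 (Over Y) :=
    (Over.pullbackComp s f).symm ≪≫ eqToIso (by simp only [hs]) ≪≫ Over.pullbackId
  -- `pullback f` reflects isomorphisms
  have hrefl : (Over.pullback f).ReflectsIsomorphisms := by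
    constructor
    intro M N φ hφ
    have h1 : IsIso ((Over.pullback f ⋙ Over.pullback s).map φ) := by
      dsimp
      infer_instance
    have h2 : IsIso ((𝟭 (Over Y)).map φ) := (NatIso.isIso_map_iff e φ).mp h1
    simpa using h2
  -- every `pullback f`-split pair has a split coequalizer in `Over Y`
  have hsp : ∀ {M N : Over Y} (u v : M ⟶ N) [(Over.pullback f).IsSplitPair u v],
      HasSplitCoequalizer u v := by
    intro M N u v h
    obtain ⟨Z, π, ⟨q⟩⟩ := h.splittable
    exact ⟨_, _, ⟨(q.map (Over.pullback s)).ofNatIso e⟩⟩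
  have h1 : CategoryTheory.Monad.HasCoequalizerOfIsSplitPair (Over.pullback f) := by
    constructor
    intro M N u v hp
    have := hsp u v
    infer_instance
  have h2 : CategoryTheory.Monad.PreservesColimitOfIsSplitPair (Over.pullback f) := by
    constructor
    intro M N u v hp
    have := hsp u v
    infer_instance
  exact ⟨Monad.monadicOfHasPreservesGSplitCoequalizersOfReflectsIsomorphisms
    (Over.mapPullbackAdj f)⟩
end
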